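/- arXiv:2309.03086 — 6 statements merged into one kernel-verified Lean document; each statement's English description precedes it below -/
import Mathlib

section
/- Let x, y ∈ ℝⁿ with x ≠ 0 and y ≠ 0, and let Π_{span x} = (x/‖x‖)(x/‖x‖)ᵀ and Π_{span y} = (y/‖y‖)(y/‖y‖)ᵀ be the orthogonal projection matrices onto the lines spanned by x and y. Then ‖Π_{span x} − Π_{span y}‖ ≤ (2/‖x‖)·‖x − y‖, where ‖·‖ on the left is the Frobenius norm. -/
/-- Frobenius norm of a real square matrix. -/
noncomputable def frobNorm {n : ℕ} (M : Matrix (Fin n) (Fin n) ℝ) : ℝ :=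
  Real.sqrt (∑ i, ∑ j, (M i j) ^ 2)

/-- Outer product `x xᵀ` of a vector of `ℝⁿ` with itself. -/
noncomputable def outerProd {n : ℕ} (x : EuclideanSpace ℝ (Fin n)) :
    Matrix (Fin n) (Fin n) ℝ :=
  Matrix.of fun i j => x i * x j

/-- Orthogonal projection matrix `(x/‖x‖)(x/‖x‖)ᵀ` onto the line spanned by `x`. -/
noncomputable def lineProj {n : ℕ} (x : EuclideanSpace ℝ (Fin n)) :
    Matrix (Fin n) (Fin n) ℝ :=
  outerProd (‖x‖⁻¹ • x)

lemma sum_expand {n : ℕ} (u v : Fin n → ℝ) :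
    ∑ i, ∑ j, (u i * u j - v i * v j)^2
      = (∑ i, u i * u i)^2 - 2*(∑ i, u i * v i)^2 + (∑ i, v i * v i)^2 := by
  calc ∑ i, ∑ j, (u i * u j - v i * v j)^2
      = ∑ i, (u i * u i * (∑ j, u j * u j) - u i * v i * (2 * ∑ j, u j * v j)
          + v i * v i * (∑ j, v j * v j)) := by
        refine Finset.sum_congr rfl fun i _ => ?_
        rw [Finset.mul_sum, Finset.mul_sum, Finset.mul_sum, Finset.mul_sum,
          ← Finset.sum_sub_distrib, ← Finset.sum_add_distrib]
        exact Finset.sum_congr rfl fun j _ => by ring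
    _ = _ := by
        rw [Finset.sum_add_distrib, Finset.sum_sub_distrib, ← Finset.sum_mul,
          ← Finset.sum_mul, ← Finset.sum_mul]
        ring

lemma inner_eq_sum' {n : ℕ} (u v : EuclideanSpace ℝ (Fin n)) :
    (inner ℝ u v : ℝ) = ∑ i, u i * v i := by
  simp [PiLp.inner_apply, RCLike.inner_apply, conj_trivial, mul_comm]

theorem stmt3 {n : ℕ} (x y : EuclideanSpace ℝ (Fin n)) (hx : x ≠ 0) (hy : y ≠ 0) :
    frobNorm (lineProj x - lineProj y) ≤ 2 / ‖x‖ * ‖x - y‖ := by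
  set u : EuclideanSpace ℝ (Fin n) := ‖x‖⁻¹ • x with hu
  set v : EuclideanSpace ℝ (Fin n) := ‖y‖⁻¹ • y with hv
  have ha : (0:ℝ) < ‖x‖ := norm_pos_iff.mpr hx
  have hb : (0:ℝ) < ‖y‖ := norm_pos_iff.mpr hy
  have hc : (0:ℝ) ≤ ‖x - y‖ := norm_nonneg _
  have hun : ‖u‖ = 1 := by
    rw [hu, norm_smul, norm_inv, norm_norm, inv_mul_cancel₀ ha.ne']
  have hvn : ‖v‖ = 1 := by
    rw [hv, norm_smul, norm_inv, norm_norm, inv_mul_cancel₀ hb.ne']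
  set t : ℝ := inner ℝ u v with ht
  have huu : (∑ i, u i * u i) = 1 := by
    rw [← inner_eq_sum', real_inner_self_eq_norm_sq, hun]; norm_num
  have hvv : (∑ i, v i * v i) = 1 := by
    rw [← inner_eq_sum', real_inner_self_eq_norm_sq, hvn]; norm_num
  have htsum : (∑ i, u i * v i) = t := (inner_eq_sum' u v).symm
  -- the Frobenius norm squared equals 2 - 2 t²
  have hsum : ∑ i, ∑ j, ((lineProj x - lineProj y) i j)^2 = 2 - 2*t^2 := by
    have : ∀ i j, (lineProj x - lineProj y) i j = u i * u j - v i * v j := by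
      intro i j
      simp [lineProj, outerProd, Matrix.sub_apply, hu, hv]
    simp_rw [this]
    rw [sum_expand, huu, hvv, htsum]; ring
  -- relate t to x, y
  have hst : (inner ℝ x y : ℝ) = t * ‖x‖ * ‖y‖ := by
    rw [ht, hu, hv, real_inner_smul_left, real_inner_smul_right]
    field_simp
  have hcsq : ‖x - y‖^2 = ‖x‖^2 - 2*(t*‖x‖*‖y‖) + ‖y‖^2 := by
    rw [← hst, @norm_sub_sq_real]
  have hkey : 2 - 2*t^2 ≤ (2/‖x‖ * ‖x - y‖)^2 := by
    have h4 : (2/‖x‖ * ‖x - y‖)^2 = 4 * ‖x - y‖^2 / ‖x‖^2 := by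
      field_simp; ring
    rw [h4, le_div_iff₀ (by positivity)]
    nlinarith [sq_nonneg (‖y‖ - t*‖x‖), sq_nonneg (‖x - y‖), sq_nonneg (t*‖x - y‖)]
  rw [frobNorm, hsum]
  calc Real.sqrt (2 - 2*t^2) ≤ Real.sqrt ((2/‖x‖ * ‖x - y‖)^2) :=
        Real.sqrt_le_sqrt hkey
    _ = 2/‖x‖ * ‖x - y‖ := Real.sqrt_sq (by positivity)
end

section
/- Let A and B be real symmetric n×n matrices, with A positive definite with smallest eigenvalue λ > 0, and suppose ‖A − B‖_op < λ, where ‖·‖_op is the operator norm. Then B is positive definite and ‖A^{-1/2} − B^{-1/2}‖_op ≤ ‖A − B‖_op^{1/2} · λ^{-1/2} · (λ − ‖A − B‖_op)^{-1/2}, where M^{-1/2} denotes the inverse of the unique symmetric positive-definite square root of a symmetric positive-definite matrix M. -/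
/-- Operator norm of a real square matrix with respect to the Euclidean norm on `ℝⁿ`. -/
noncomputable def opNorm {n : ℕ} (M : Matrix (Fin n) (Fin n) ℝ) : ℝ :=
  ‖LinearMap.toContinuousLinearMap (Matrix.toEuclideanLin M)‖

/-- The positive semidefinite square root of a positive semidefinite matrix
(the definition `Matrix.PosSemidef.sqrt` of the older Mathlib, since removed). -/
noncomputable def Matrix.PosSemidef.sqrt {𝕜 : Type*} [RCLike 𝕜] [PartialOrder 𝕜] [StarOrderedRing 𝕜]
    {m : Type*} [Fintype m]
    [DecidableEq m] {A : Matrix m m 𝕜} (hA : A.PosSemidef) : Matrix m m 𝕜 :=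
  hA.1.eigenvectorUnitary.1 * Matrix.diagonal ((↑) ∘ Real.sqrt ∘ hA.1.eigenvalues) *
  (star hA.1.eigenvectorUnitary : Matrix m m 𝕜)

namespace Matrix.PosSemidef

variable {m : Type*} [Fintype m] [DecidableEq m] {A : Matrix m m ℝ}

lemma posSemidef_sqrt (hA : A.PosSemidef) : hA.sqrt.PosSemidef := by
  unfold Matrix.PosSemidef.sqrt
  have := (Matrix.posSemidef_diagonal_iff
    (d := ((↑) ∘ Real.sqrt ∘ hA.1.eigenvalues : m → ℝ))).mpr (fun i => by simp [Real.sqrt_nonneg])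
  exact this.mul_mul_conjTranspose_same _

lemma sqrt_mul_self (hA : A.PosSemidef) : hA.sqrt * hA.sqrt = A := by
  unfold Matrix.PosSemidef.sqrt
  set U := hA.1.eigenvectorUnitary
  have hU : (star U : Matrix m m ℝ) * (U : Matrix m m ℝ) = 1 := Unitary.coe_star_mul_self U
  conv_rhs => rw [hA.1.spectral_theorem, Unitary.conjStarAlgAut_apply]
  calc _ = (U : Matrix m m ℝ) * (Matrix.diagonal ((RCLike.ofReal : ℝ → ℝ) ∘ Real.sqrt ∘ hA.1.eigenvalues) *
        ((star U : Matrix m m ℝ) * (U : Matrix m m ℝ)) * Matrix.diagonal ((RCLike.ofReal : ℝ → ℝ) ∘ Real.sqrt ∘ hA.1.eigenvalues)) *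
        (star U : Matrix m m ℝ) := by simp only [Matrix.mul_assoc]
    _ = _ := by
      rw [hU, Matrix.mul_one, Matrix.diagonal_mul_diagonal]
      congr 2
      ext i j
      simp only [Matrix.diagonal_apply]
      split_ifs with h
      · subst h; simp [Real.mul_self_sqrt (hA.eigenvalues_nonneg _)]
      · rfl

end Matrix.PosSemidef

open scoped Matrix.Norms.L2Operator RealInnerProductSpace
open Matrix

namespace Stmt5Aux

variable {n : ℕ}

/-- `mulVec` as a map on Euclidean space. -/
noncomputable def mv (M : Matrix (Fin n) (Fin n) ℝ) (x : EuclideanSpace ℝ (Fin n)) :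
    EuclideanSpace ℝ (Fin n) :=
  (EuclideanSpace.equiv (Fin n) ℝ).symm (M *ᵥ x)

lemma weq (z : Fin n → ℝ) : (WithLp.equiv 2 (Fin n → ℝ)).symm z = z := rfl

lemma weq' (z : EuclideanSpace ℝ (Fin n)) : (WithLp.equiv 2 (Fin n → ℝ)) z = z := rfl

lemma opNorm_eq (M : Matrix (Fin n) (Fin n) ℝ) : opNorm M = ‖M‖ := rfl

lemma norm_mv_le (M : Matrix (Fin n) (Fin n) ℝ) (x : EuclideanSpace ℝ (Fin n)) :
    ‖mv M x‖ ≤ ‖M‖ * ‖x‖ :=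
  Matrix.l2_opNorm_mulVec M x

lemma mv_mul (M N : Matrix (Fin n) (Fin n) ℝ) (x : EuclideanSpace ℝ (Fin n)) :
    mv (M * N) x = mv M (mv N x) := by
  simp [mv, weq, Matrix.mulVec_mulVec]

lemma mv_one (x : EuclideanSpace ℝ (Fin n)) : mv 1 x = x := by
  simp [mv, weq]

lemma mv_smul (M : Matrix (Fin n) (Fin n) ℝ) (t : ℝ) (x : EuclideanSpace ℝ (Fin n)) :
    mv M (t • x) = t • mv M x := by
  simp only [mv, weq]
  exact congrArg _ (Matrix.mulVec_smul M t x)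

lemma mv_add (M N : Matrix (Fin n) (Fin n) ℝ) (x : EuclideanSpace ℝ (Fin n)) :
    mv (M + N) x = mv M x + mv N x := by
  simp [mv, weq, Matrix.add_mulVec]

lemma mv_sub (M N : Matrix (Fin n) (Fin n) ℝ) (x : EuclideanSpace ℝ (Fin n)) :
    mv (M - N) x = mv M x - mv N x := by
  simp [mv, weq, Matrix.sub_mulVec]

lemma inner_mv (M : Matrix (Fin n) (Fin n) ℝ) (x y : EuclideanSpace ℝ (Fin n)) :
    ⟪x, mv M y⟫ = dotProduct x (M *ᵥ y) := by
  simp [mv, PiLp.inner_apply, RCLike.inner_apply, dotProduct]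
  exact Finset.sum_congr rfl fun _ _ => mul_comm _ _

lemma inner_mv_symm {M : Matrix (Fin n) (Fin n) ℝ} (hM : M.IsHermitian)
    (x y : EuclideanSpace ℝ (Fin n)) : ⟪mv M x, y⟫ = ⟪x, mv M y⟫ := by
  have hMt : Mᵀ = M := (Matrix.conjTranspose_eq_transpose_of_trivial M).symm.trans hM
  rw [real_inner_comm, inner_mv, inner_mv, dotProduct_mulVec,
    ← Matrix.mulVec_transpose, hMt, dotProduct_comm]

section Spectral

variable {n : ℕ} {M : Matrix (Fin n) (Fin n) ℝ} (hM : M.IsHermitian)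

lemma mv_eigenvectorBasis (j : Fin n) :
    mv M (hM.eigenvectorBasis j) = hM.eigenvalues j • hM.eigenvectorBasis j :=
  congrArg (WithLp.equiv 2 (Fin n → ℝ)).symm (hM.mulVec_eigenvectorBasis j)

lemma repr_mv (x : EuclideanSpace ℝ (Fin n)) (j : Fin n) :
    hM.eigenvectorBasis.repr (mv M x) j = hM.eigenvalues j * hM.eigenvectorBasis.repr x j := by
  rw [OrthonormalBasis.repr_apply_apply, OrthonormalBasis.repr_apply_apply,
    ← inner_mv_symm hM, mv_eigenvectorBasis hM, real_inner_smul_left]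

lemma inner_mv_self_eq (x : EuclideanSpace ℝ (Fin n)) :
    ⟪x, mv M x⟫ = ∑ j, hM.eigenvalues j * (hM.eigenvectorBasis.repr x j)^2 := by
  rw [← LinearIsometryEquiv.inner_map_map hM.eigenvectorBasis.repr, PiLp.inner_apply]
  refine Finset.sum_congr rfl fun j _ => ?_
  simp [RCLike.inner_apply, repr_mv hM]
  ring

lemma norm_sq_eq_sum (x : EuclideanSpace ℝ (Fin n)) :
    ‖x‖^2 = ∑ j, (hM.eigenvectorBasis.repr x j)^2 := by
  rw [← real_inner_self_eq_norm_sq, ← LinearIsometryEquiv.inner_map_map hM.eigenvectorBasis.repr,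
    PiLp.inner_apply]
  refine Finset.sum_congr rfl fun j _ => ?_
  simp [RCLike.inner_apply]

lemma quad_lower (c : ℝ) (hc : ∀ i, c ≤ hM.eigenvalues i) (x : EuclideanSpace ℝ (Fin n)) :
    c * ‖x‖^2 ≤ ⟪x, mv M x⟫ := by
  rw [inner_mv_self_eq hM, norm_sq_eq_sum hM, Finset.mul_sum]
  exact Finset.sum_le_sum fun j _ => mul_le_mul_of_nonneg_right (hc j) (sq_nonneg _)

lemma quad_upper_abs (M : Matrix (Fin n) (Fin n) ℝ) (x : EuclideanSpace ℝ (Fin n)) :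
    |⟪x, mv M x⟫| ≤ ‖M‖ * ‖x‖^2 := by
  calc |⟪x, mv M x⟫| ≤ ‖x‖ * ‖mv M x‖ := abs_real_inner_le_norm x _
    _ ≤ ‖x‖ * (‖M‖ * ‖x‖) := mul_le_mul_of_nonneg_left (norm_mv_le M x) (norm_nonneg x)
    _ = ‖M‖ * ‖x‖^2 := by ring

lemma opNorm_le_of_bound (M : Matrix (Fin n) (Fin n) ℝ) (c : ℝ) (hc : 0 ≤ c)
    (h : ∀ x : EuclideanSpace ℝ (Fin n), ‖mv M x‖ ≤ c * ‖x‖) : ‖M‖ ≤ c := by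
  rw [Matrix.l2_opNorm_def]
  exact ContinuousLinearMap.opNorm_le_bound _ hc h

lemma norm_le_of_eig (c : ℝ) (hc : 0 ≤ c) (h : ∀ i, |hM.eigenvalues i| ≤ c) : ‖M‖ ≤ c := by
  refine opNorm_le_of_bound M c hc fun x => ?_
  have h2 : ‖mv M x‖^2 ≤ (c * ‖x‖)^2 := by
    rw [← real_inner_self_eq_norm_sq,
      ← LinearIsometryEquiv.inner_map_map hM.eigenvectorBasis.repr, PiLp.inner_apply]
    have : ∀ j : Fin n, (inner ℝ (hM.eigenvectorBasis.repr (mv M x) j)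
        (hM.eigenvectorBasis.repr (mv M x) j) : ℝ)
        = (hM.eigenvalues j)^2 * (hM.eigenvectorBasis.repr x j)^2 := by
      intro j; simp [RCLike.inner_apply, repr_mv hM]; rw [mul_pow, sq_abs, sq_abs]
    rw [Finset.sum_congr rfl fun j _ => this j]
    have hb : ∀ j : Fin n, (hM.eigenvalues j)^2 * (hM.eigenvectorBasis.repr x j)^2
        ≤ c^2 * (hM.eigenvectorBasis.repr x j)^2 := by
      intro j
      refine mul_le_mul_of_nonneg_right ?_ (sq_nonneg _)
      rw [← sq_abs]
      exact pow_le_pow_left₀ (abs_nonneg _) (h j) 2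
    calc ∑ j, (hM.eigenvalues j)^2 * (hM.eigenvectorBasis.repr x j)^2
        ≤ ∑ j, c^2 * (hM.eigenvectorBasis.repr x j)^2 := Finset.sum_le_sum fun j _ => hb j
      _ = (c * ‖x‖)^2 := by rw [← Finset.mul_sum, ← norm_sq_eq_sum hM]; ring
  have := (pow_le_pow_iff_left₀ (norm_nonneg _) (by positivity) (two_ne_zero)).mp h2
  exact this

lemma exists_eig_attain [Nonempty (Fin n)] (hM : M.IsHermitian) :
    ∃ t : ℝ, ∃ v : EuclideanSpace ℝ (Fin n), ‖v‖ = 1 ∧ mv M v = t • v ∧ |t| = ‖M‖ := by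
  obtain ⟨i, hi⟩ := Finite.exists_max (fun i => |hM.eigenvalues i|)
  refine ⟨hM.eigenvalues i, hM.eigenvectorBasis i, hM.eigenvectorBasis.orthonormal.1 i,
    mv_eigenvectorBasis hM i, le_antisymm ?_ (norm_le_of_eig hM _ (abs_nonneg _) hi)⟩
  calc |hM.eigenvalues i| = ‖hM.eigenvalues i • hM.eigenvectorBasis i‖ := by
        rw [norm_smul, hM.eigenvectorBasis.orthonormal.1 i, Real.norm_eq_abs, mul_one]
    _ = ‖mv M (hM.eigenvectorBasis i)‖ := by rw [mv_eigenvectorBasis hM]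
    _ ≤ ‖M‖ * ‖hM.eigenvectorBasis i‖ := norm_mv_le M _
    _ = ‖M‖ := by rw [hM.eigenvectorBasis.orthonormal.1 i, mul_one]

end Spectral

section Main

variable {n : ℕ}

lemma posSemidef_inner {M : Matrix (Fin n) (Fin n) ℝ} (hM : M.PosSemidef)
    (x : EuclideanSpace ℝ (Fin n)) : 0 ≤ ⟪x, mv M x⟫ := by
  rw [inner_mv]
  simpa using hM.dotProduct_mulVec_nonneg x

lemma norm_sqrt_sub_sqrt {A B : Matrix (Fin n) (Fin n) ℝ} (hA : A.PosSemidef)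
    (hB : B.PosSemidef) : ‖hA.sqrt - hB.sqrt‖ ≤ Real.sqrt ‖A - B‖ := by
  rcases isEmpty_or_nonempty (Fin n) with hn | hn
  · have h0 : hA.sqrt - hB.sqrt = 0 := Subsingleton.elim _ _
    rw [h0, norm_zero]
    exact Real.sqrt_nonneg _
  · have hSA := hA.posSemidef_sqrt
    have hSB := hB.posSemidef_sqrt
    have hE : (hA.sqrt - hB.sqrt).IsHermitian := hSA.1.sub hSB.1
    obtain ⟨t, v, hv1, hvE, hts⟩ := exists_eig_attain hE
    set SA := hA.sqrt
    set SB := hB.sqrt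
    set a : ℝ := ⟪v, mv SA v⟫ with ha_def
    set b : ℝ := ⟪v, mv SB v⟫ with hb_def
    have ha : 0 ≤ a := posSemidef_inner hSA v
    have hb : 0 ≤ b := posSemidef_inner hSB v
    have hvv : (⟪v, v⟫ : ℝ) = 1 := by
      rw [real_inner_self_eq_norm_sq, hv1]; norm_num
    have ht : t = a - b := by
      have h1 : (⟪v, mv (SA - SB) v⟫ : ℝ) = t := by
        rw [hvE, real_inner_smul_right, hvv, mul_one]
      rw [← h1, mv_sub, inner_sub_right]
    have hdecomp : A - B = SA * (SA - SB) + (SA - SB) * SB := by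
      have h1 : SA * SA = A := hA.sqrt_mul_self
      have h2 : SB * SB = B := hB.sqrt_mul_self
      rw [← h1, ← h2]
      noncomm_ring
    have h3 : (⟪v, mv (A - B) v⟫ : ℝ) = t * (a + b) := by
      rw [hdecomp, mv_add, inner_add_right, mv_mul, mv_mul, hvE, mv_smul,
        inner_smul_right, ← inner_mv_symm hE, hvE, real_inner_smul_left]
      ring
    have habs : |t| ≤ a + b := by
      rw [ht]
      exact abs_le.mpr ⟨by linarith, by linarith⟩
    have hsq : t ^ 2 ≤ ‖A - B‖ := by
      have c1 : t ^ 2 ≤ |t| * (a + b) := by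
        rw [pow_two, ← abs_mul_self t, abs_mul]
        exact mul_le_mul_of_nonneg_left habs (abs_nonneg t)
      have c2 : |t| * (a + b) = |⟪v, mv (A - B) v⟫| := by
        rw [h3, abs_mul, abs_of_nonneg (by linarith : (0:ℝ) ≤ a + b)]
      have c3 : |⟪v, mv (A - B) v⟫| ≤ ‖A - B‖ * ‖v‖ ^ 2 := quad_upper_abs _ v
      rw [hv1] at c3
      simp only [one_pow, mul_one] at c3
      linarith
    calc ‖SA - SB‖ = |t| := hts.symm
      _ = Real.sqrt (t ^ 2) := (Real.sqrt_sq_eq_abs t).symm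
      _ ≤ Real.sqrt ‖A - B‖ := Real.sqrt_le_sqrt hsq

lemma norm_inv_sqrt_le {M : Matrix (Fin n) (Fin n) ℝ} (hM : M.PosSemidef)
    (hdet : IsUnit hM.sqrt.det) (c : ℝ) (hc : 0 < c)
    (hq : ∀ x : EuclideanSpace ℝ (Fin n), c * ‖x‖ ^ 2 ≤ ⟪x, mv M x⟫) :
    ‖hM.sqrt⁻¹‖ ≤ (Real.sqrt c)⁻¹ := by
  refine opNorm_le_of_bound _ _ (by positivity) fun y => ?_
  set S := hM.sqrt with hS
  set x := mv S⁻¹ y with hx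
  have hSx : mv S x = y := by
    rw [hx, ← mv_mul, Matrix.mul_nonsing_inv _ hdet, mv_one]
  have h1 : c * ‖x‖ ^ 2 ≤ ‖y‖ ^ 2 := by
    have h := hq x
    rw [← hM.sqrt_mul_self, mv_mul, ← hS, ← inner_mv_symm hM.posSemidef_sqrt.1, hSx,
      real_inner_self_eq_norm_sq] at h
    exact h
  have h2 : ‖x‖ ^ 2 ≤ ((Real.sqrt c)⁻¹ * ‖y‖) ^ 2 := by
    rw [mul_pow, inv_pow, Real.sq_sqrt hc.le]
    rw [le_inv_mul_iff₀ hc]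
    exact h1
  exact (pow_le_pow_iff_left₀ (norm_nonneg x) (by positivity) two_ne_zero).mp h2

end Main

end Stmt5Aux

open Stmt5Aux in
theorem stmt5 {n : ℕ} (A B : Matrix (Fin n) (Fin n) ℝ)
    (hApd : A.PosDef) (hBsymm : B.IsHermitian)
    (lam : ℝ) (hlam : IsLeast (Set.range hApd.isHermitian.eigenvalues) lam)
    (hlampos : 0 < lam) (hAB : opNorm (A - B) < lam) :
    B.PosDef ∧ ∀ hBpsd : B.PosSemidef,
      opNorm (hApd.posSemidef.sqrt⁻¹ - hBpsd.sqrt⁻¹) ≤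
        Real.sqrt (opNorm (A - B)) * (Real.sqrt lam)⁻¹ *
          (Real.sqrt (lam - opNorm (A - B)))⁻¹ := by
  rw [opNorm_eq] at hAB
  have hlow : ∀ i, lam ≤ hApd.isHermitian.eigenvalues i := fun i => hlam.2 ⟨i, rfl⟩
  have hquadA : ∀ x : EuclideanSpace ℝ (Fin n), lam * ‖x‖ ^ 2 ≤ ⟪x, mv A x⟫ :=
    quad_lower hApd.isHermitian lam hlow
  have hquadB : ∀ x : EuclideanSpace ℝ (Fin n), (lam - ‖A - B‖) * ‖x‖ ^ 2 ≤ ⟪x, mv B x⟫ := by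
    intro x
    have h1 := hquadA x
    have h2 := abs_le.mp (quad_upper_abs (A - B) x)
    have h3 : (⟪x, mv B x⟫ : ℝ) = ⟪x, mv A x⟫ - ⟪x, mv (A - B) x⟫ := by
      rw [mv_sub, inner_sub_right]; ring
    rw [h3, sub_mul]
    linarith [h2.2]
  have hBpd : B.PosDef := by
    refine Matrix.PosDef.of_dotProduct_mulVec_pos hBsymm fun x hx => ?_
    set x' : EuclideanSpace ℝ (Fin n) := (WithLp.equiv 2 (Fin n → ℝ)).symm x with hx'
    have hx'0 : x' ≠ 0 := fun h => hx (congrArg (WithLp.equiv 2 (Fin n → ℝ)) h)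
    have hn : 0 < ‖x'‖ := norm_pos_iff.mpr hx'0
    have h := hquadB x'
    have hgap : 0 < lam - ‖A - B‖ := by linarith
    have hpos : 0 < (lam - ‖A - B‖) * ‖x'‖ ^ 2 := mul_pos hgap (by positivity)
    have heq : (⟪x', mv B x'⟫ : ℝ) = dotProduct (star x) (B *ᵥ x) := by
      rw [inner_mv, star_trivial]; rfl
    rw [← heq]
    exact lt_of_lt_of_le hpos h
  refine ⟨hBpd, fun hBpsd => ?_⟩
  simp only [opNorm_eq]
  set SA := hApd.posSemidef.sqrt with hSAdef
  set SB := hBpsd.sqrt with hSBdef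
  have hdetSA : IsUnit SA.det := by
    have h1 : SA * SA = A := hApd.posSemidef.sqrt_mul_self
    have h2 : (0:ℝ) < A.det := hApd.det_pos
    rw [← h1, Matrix.det_mul] at h2
    exact isUnit_iff_ne_zero.mpr fun h => by simp [h] at h2
  have hdetSB : IsUnit SB.det := by
    have h1 : SB * SB = B := hBpsd.sqrt_mul_self
    have h2 : (0:ℝ) < B.det := hBpd.det_pos
    rw [← h1, Matrix.det_mul] at h2
    exact isUnit_iff_ne_zero.mpr fun h => by simp [h] at h2
  have hid : SA⁻¹ - SB⁻¹ = SA⁻¹ * (SB - SA) * SB⁻¹ := by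
    rw [Matrix.mul_sub, Matrix.sub_mul, Matrix.nonsing_inv_mul _ hdetSA, Matrix.mul_assoc,
      Matrix.mul_nonsing_inv _ hdetSB, Matrix.mul_one, Matrix.one_mul]
  have hnorm : ‖SA⁻¹ - SB⁻¹‖ ≤ ‖SA⁻¹‖ * ‖SB - SA‖ * ‖SB⁻¹‖ := by
    rw [hid]
    exact (norm_mul_le _ _).trans (mul_le_mul_of_nonneg_right (norm_mul_le _ _) (norm_nonneg _))
  have h1 : ‖SA⁻¹‖ ≤ (Real.sqrt lam)⁻¹ :=
    norm_inv_sqrt_le hApd.posSemidef hdetSA lam hlampos hquadA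
  have h2 : ‖SB⁻¹‖ ≤ (Real.sqrt (lam - ‖A - B‖))⁻¹ :=
    norm_inv_sqrt_le hBpsd hdetSB _ (by linarith) hquadB
  have h4 : ‖SB - SA‖ ≤ Real.sqrt ‖A - B‖ := by
    rw [norm_sub_rev]
    exact norm_sqrt_sub_sqrt hApd.posSemidef hBpsd
  calc ‖SA⁻¹ - SB⁻¹‖ ≤ ‖SA⁻¹‖ * ‖SB - SA‖ * ‖SB⁻¹‖ := hnorm
    _ ≤ (Real.sqrt lam)⁻¹ * Real.sqrt ‖A - B‖ * (Real.sqrt (lam - ‖A - B‖))⁻¹ := by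
        gcongr <;> positivity
    _ = Real.sqrt ‖A - B‖ * (Real.sqrt lam)⁻¹ * (Real.sqrt (lam - ‖A - B‖))⁻¹ := by ring
end

section
/- Let 𝒪 ⊂ ℝⁿ be a nonempty compact set and δ = sup_{y ∈ 𝒪} ‖y‖. Let ĥ be a set of skew-symmetric real n×n matrices and β ≥ 0 such that for every A ∈ ĥ there exist an orthogonal matrix Q and B = Q A Qᵀ with ‖A − B‖ ≤ β (Frobenius norm) and exp(tB)·𝒪 = 𝒪 for all t ∈ ℝ. Then for every x ∈ ℝⁿ and every A ∈ ĥ, dist(exp(A)x, 𝒪) ≤ (β + 1)·dist(x, 𝒪) + β δ, where dist denotes the Euclidean distance from a point to a set. In particular the one-sided Hausdorff distance from the set {exp(A)x : A ∈ ĥ} to 𝒪 is at most (β+1)·dist(x,𝒪) + βδ. -/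
open Matrix NormedSpace RealInnerProductSpace

set_option maxHeartbeats 1000000
set_option synthInstance.maxHeartbeats 400000

section aux
variable {n : ℕ}

local notation "𝔸" => (EuclideanSpace ℝ (Fin n) →L[ℝ] EuclideanSpace ℝ (Fin n))

lemma unitary_norm_apply (u : 𝔸) (hu : u ∈ unitary 𝔸) (x : EuclideanSpace ℝ (Fin n)) :
    ‖u x‖ = ‖x‖ := by
  have h1 : ⟪u x, u x⟫ = ⟪x, x⟫ := by
    rw [← ContinuousLinearMap.adjoint_inner_left u x (u x),
      ← ContinuousLinearMap.star_eq_adjoint]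
    have h2 : (star u) (u x) = x := by
      rw [show (star u) ((u : 𝔸) x) = (star u * u) x from rfl, (Unitary.mem_iff.mp hu).1]
      rfl
    rw [h2]
  have h2 := congrArg Real.sqrt h1
  rwa [real_inner_self_eq_norm_sq, real_inner_self_eq_norm_sq,
    Real.sqrt_sq (norm_nonneg _), Real.sqrt_sq (norm_nonneg _)] at h2

lemma exp_skew_unitary (a : 𝔸) (ha : star a = -a) : exp a ∈ unitary 𝔸 :=
  letI : NormedAlgebra ℚ 𝔸 := .restrictScalars ℚ ℝ 𝔸
  exp_mem_unitary_of_mem_skewAdjoint (skewAdjoint.mem_iff.mpr ha)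

lemma unitary_conj_norm_le (u v T : 𝔸) (hu : u ∈ unitary 𝔸) (hv : v ∈ unitary 𝔸) :
    ‖u * T * v‖ ≤ ‖T‖ := by
  apply ContinuousLinearMap.opNorm_le_bound _ (norm_nonneg T)
  intro x
  have h0 : (u * T * v) x = u (T (v x)) := rfl
  rw [h0, unitary_norm_apply u hu]
  calc ‖T (v x)‖ ≤ ‖T‖ * ‖v x‖ := T.le_opNorm _
    _ = ‖T‖ * ‖x‖ := by rw [unitary_norm_apply v hv]

lemma exp_diff_opnorm (a b : 𝔸) (ha : star a = -a) (hb : star b = -b) :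
    ‖exp a - exp b‖ ≤ ‖a - b‖ := by
  set f : ℝ → 𝔸 := fun s => exp (s • a) * exp ((1 - s) • b) with hf
  set f' : ℝ → 𝔸 := fun s => exp (s • a) * (a - b) * exp ((1 - s) • b) with hf'
  have hderiv : ∀ s ∈ Set.uIcc (0:ℝ) 1, HasDerivAt f (f' s) s := by
    intro s _
    have h1 : HasDerivAt (fun s : ℝ => exp (s • a)) (exp (s • a) * a) s :=
      hasDerivAt_exp_smul_const a s
    have h2 : HasDerivAt (fun s : ℝ => exp ((1 - s) • b))
        ((-1 : ℝ) • (b * exp ((1 - s) • b))) s := by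
      have hb' : HasDerivAt (fun u : ℝ => exp (u • b)) (b * exp ((1 - s) • b)) (1 - s) :=
        hasDerivAt_exp_smul_const' b (1 - s)
      have hs : HasDerivAt (fun s : ℝ => 1 - s) (-1) s := (hasDerivAt_id s).const_sub 1
      exact hb'.scomp s hs
    have h3 := h1.mul h2
    have hneg : ((-1 : ℝ) • (b * exp ((1 - s) • b)) : 𝔸)
        = -(b * exp ((1 - s) • b)) := by
      first
      | exact neg_one_smul ℝ _
      | (ext v; simp)
    have e : exp (s • a) * a * exp ((1 - s) • b)
        + exp (s • a) * ((-1 : ℝ) • (b * exp ((1 - s) • b))) = f' s := by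
      rw [hneg, hf']
      noncomm_ring
    exact e ▸ h3
  have hcont : Continuous f' := by
    letI : NormedAlgebra ℚ 𝔸 := .restrictScalars ℚ ℝ 𝔸
    have hc1 : Continuous fun s : ℝ => exp (s • a) :=
      exp_continuous.comp (continuous_id.smul continuous_const)
    have hc2 : Continuous fun s : ℝ => exp ((1 - s) • b) :=
      exp_continuous.comp ((continuous_const.sub continuous_id).smul continuous_const)
    exact (hc1.mul continuous_const).mul hc2
  have key : ∫ s in (0:ℝ)..1, f' s = f 1 - f 0 :=
    intervalIntegral.integral_eq_sub_of_hasDerivAt hderiv (hcont.intervalIntegrable 0 1)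
  have hone : ((1:ℝ) • a : 𝔸) = a := one_smul ℝ a
  have hzero : (((1:ℝ) - 1) • b : 𝔸) = 0 := by rw [sub_self]; exact zero_smul ℝ b
  have hzero' : (((0:ℝ)) • a : 𝔸) = 0 := zero_smul ℝ a
  have hone' : (((1:ℝ) - 0) • b : 𝔸) = b := by rw [sub_zero]; exact one_smul ℝ b
  have hf1 : f 1 = exp a := by
    rw [hf]
    show exp ((1:ℝ) • a) * exp (((1:ℝ) - 1) • b) = exp a
    rw [hone, hzero, exp_zero, mul_one]
  have hf0 : f 0 = exp b := by
    rw [hf]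
    show exp ((0:ℝ) • a) * exp (((1:ℝ) - 0) • b) = exp b
    rw [hzero', hone', exp_zero, one_mul]
  have hbound : ∀ s ∈ Set.uIoc (0:ℝ) 1, ‖f' s‖ ≤ ‖a - b‖ := by
    intro s _
    apply unitary_conj_norm_le
    · apply exp_skew_unitary
      rw [star_smul, ha, star_trivial, smul_neg]
    · apply exp_skew_unitary
      rw [star_smul, hb, star_trivial, smul_neg]
  calc ‖exp a - exp b‖ = ‖∫ s in (0:ℝ)..1, f' s‖ := by rw [key, hf1, hf0]
    _ ≤ ‖a - b‖ * |1 - 0| := intervalIntegral.norm_integral_le_of_norm_le_const hbound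
    _ = ‖a - b‖ := by norm_num

lemma frobNorm_def (M : Matrix (Fin n) (Fin n) ℝ) :
    frobNorm M = Real.sqrt (∑ i, ∑ j, (M i j) ^ 2) := rfl

lemma toCLM_opnorm_le_frob (M : Matrix (Fin n) (Fin n) ℝ) :
    ‖Matrix.toEuclideanCLM (𝕜 := ℝ) M‖ ≤ frobNorm M := by
  apply ContinuousLinearMap.opNorm_le_bound _ (Real.sqrt_nonneg _)
  intro x
  have happ : ∀ i, (Matrix.toEuclideanCLM (𝕜 := ℝ) M x) i = ∑ j, M i j * x j := fun i => rfl
  rw [EuclideanSpace.norm_eq, EuclideanSpace.norm_eq,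
    ← Real.sqrt_mul (by positivity)]
  apply Real.sqrt_le_sqrt
  simp only [happ, Real.norm_eq_abs, sq_abs]
  rw [Finset.sum_mul]
  apply Finset.sum_le_sum
  intro i _
  exact Finset.sum_mul_sq_le_sq_mul_sq _ _ _

lemma toCLM_continuous : Continuous (⇑(Matrix.toEuclideanCLM (𝕜 := ℝ) (n := Fin n))) := by
  let ψ : Matrix (Fin n) (Fin n) ℝ →ₗ[ℝ] 𝔸 :=
    { toFun := Matrix.toEuclideanCLM (𝕜 := ℝ),
      map_add' := map_add _,
      map_smul' := map_smul _ }
  exact ψ.continuous_of_finiteDimensional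

lemma toCLM_exp (M : Matrix (Fin n) (Fin n) ℝ) :
    Matrix.toEuclideanCLM (𝕜 := ℝ) (exp M) = exp (Matrix.toEuclideanCLM (𝕜 := ℝ) M) := by
  letI : NormedRing (Matrix (Fin n) (Fin n) ℝ) := Matrix.linftyOpNormedRing
  letI : NormedAlgebra ℝ (Matrix (Fin n) (Fin n) ℝ) := Matrix.linftyOpNormedAlgebra
  letI : NormedAlgebra ℚ (Matrix (Fin n) (Fin n) ℝ) := .restrictScalars ℚ ℝ _
  haveI : CompleteSpace (Matrix (Fin n) (Fin n) ℝ) := FiniteDimensional.complete ℝ _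
  exact map_exp ((Matrix.toEuclideanCLM (𝕜 := ℝ) (n := Fin n)).toRingEquiv)
    toCLM_continuous M

lemma star_matrix_real (M : Matrix (Fin n) (Fin n) ℝ) : star M = Mᵀ := by
  ext i j
  simp [Matrix.star_eq_conjTranspose, Matrix.conjTranspose_apply]

end aux

theorem stmt9 {n : ℕ} (O : Set (EuclideanSpace ℝ (Fin n)))
    (hOne : O.Nonempty) (hOcpt : IsCompact O)
    (δ : ℝ) (hδ : IsLUB ((fun y => ‖y‖) '' O) δ)
    (h : Set (Matrix (Fin n) (Fin n) ℝ)) (β : ℝ) (hβ : 0 ≤ β)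
    (hskew : ∀ A ∈ h, Aᵀ = -A)
    (hmain : ∀ A ∈ h, ∃ Q : Matrix (Fin n) (Fin n) ℝ, Qᵀ * Q = 1 ∧
      frobNorm (A - Q * A * Qᵀ) ≤ β ∧
      ∀ t : ℝ,
        (⇑(Matrix.toEuclideanLin (NormedSpace.exp (t • (Q * A * Qᵀ))))) '' O = O) :
    ∀ x : EuclideanSpace ℝ (Fin n), ∀ A ∈ h,
      Metric.infDist (Matrix.toEuclideanLin (NormedSpace.exp A) x) O ≤
        (β + 1) * Metric.infDist x O + β * δ := by
  intro x A hA
  obtain ⟨Q, hQ, hfrob, himg⟩ := hmain A hA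
  set B := Q * A * Qᵀ with hB
  have hAskew : Aᵀ = -A := hskew A hA
  have hBskew : Bᵀ = -B := by
    rw [hB, Matrix.transpose_mul, Matrix.transpose_mul, Matrix.transpose_transpose, hAskew]
    noncomm_ring
  set φ := Matrix.toEuclideanCLM (𝕜 := ℝ) (n := Fin n) with hφ
  set a := φ A with haa
  set b := φ B with hbb
  have ha : star a = -a := by
    rw [haa, ← map_star φ, star_matrix_real, hAskew, map_neg]
  have hb : star b = -b := by
    rw [hbb, ← map_star φ, star_matrix_real, hBskew, map_neg]
  have hid : ∀ (M : Matrix (Fin n) (Fin n) ℝ) (v : EuclideanSpace ℝ (Fin n)),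
      Matrix.toEuclideanLin M v = φ M v := fun M v => rfl
  obtain ⟨y, hyO, hy⟩ := hOcpt.exists_infDist_eq_dist hOne x
  have hyn : ‖y‖ ≤ δ := hδ.1 ⟨y, hyO, rfl⟩
  have hby : (exp b) y ∈ O := by
    have h1 := himg 1
    rw [one_smul] at h1
    rw [← h1]
    refine ⟨y, hyO, ?_⟩
    rw [hid, hφ, toCLM_exp, ← hφ, ← hbb]
  have hnormab : ‖a - b‖ ≤ β := by
    calc ‖a - b‖ = ‖φ (A - B)‖ := by rw [map_sub]
      _ ≤ frobNorm (A - B) := by rw [hφ]; exact toCLM_opnorm_le_frob _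
      _ ≤ β := hfrob
  have hδ0 : 0 ≤ δ := le_trans (norm_nonneg y) hyn
  have key : Metric.infDist (Matrix.toEuclideanLin (exp A) x) O ≤
      Metric.infDist x O + β * δ := by
    have h0 : Matrix.toEuclideanLin (exp A) x = (exp a) x := by
      rw [hid, hφ, toCLM_exp, ← hφ, ← haa]
    rw [h0]
    calc Metric.infDist ((exp a) x) O ≤ dist ((exp a) x) ((exp b) y) :=
          Metric.infDist_le_dist_of_mem hby
      _ ≤ dist ((exp a) x) ((exp a) y) + dist ((exp a) y) ((exp b) y) :=
          dist_triangle _ _ _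
      _ ≤ Metric.infDist x O + β * δ := by
          gcongr
          · rw [dist_eq_norm, ← map_sub, unitary_norm_apply _ (exp_skew_unitary a ha),
              ← dist_eq_norm, ← hy]
          · rw [dist_eq_norm]
            have h1 : (exp a) y - (exp b) y = (exp a - exp b) y := rfl
            rw [h1]
            calc ‖(exp a - exp b) y‖ ≤ ‖exp a - exp b‖ * ‖y‖ :=
                  ContinuousLinearMap.le_opNorm _ _
              _ ≤ ‖a - b‖ * ‖y‖ := by
                  gcongr
                  exact exp_diff_opnorm a b ha hb
              _ ≤ β * δ := by
                  have h2 := norm_nonneg y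
                  gcongr
  have hd0 : 0 ≤ Metric.infDist x O := Metric.infDist_nonneg
  nlinarith [key]
end

section
/- Let 𝒪 ⊂ ℝⁿ be a nonempty compact set with δ = sup_{y∈𝒪}‖y‖, and let 𝔰 = {B skew-symmetric : exp(tB)·𝒪 = 𝒪 for all t ∈ ℝ}. Assume the exponentials of 𝔰 act transitively on 𝒪, i.e., for all y, z ∈ 𝒪 there exists B ∈ 𝔰 with exp(B)y = z. Let β ≥ 0 and suppose there is a single orthogonal matrix Q such that ĥ := {QᵀBQ : B ∈ 𝔰} satisfies ‖QᵀBQ − B‖ ≤ β for every B ∈ 𝔰. Then for every x ∈ ℝⁿ, the (symmetric) Hausdorff distance between the set Ô_x = {exp(A)x : A ∈ ĥ} and 𝒪 is at most (β + 1)·dist(x, 𝒪) + β δ. -/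
open Matrix

section auxA

variable {n : ℕ}

lemma euclid_norm_eq (v : EuclideanSpace ℝ (Fin n)) :
    ‖v‖ = Real.sqrt (∑ i, (v i) ^ 2) := by
  rw [EuclideanSpace.norm_eq]
  congr 1
  exact Finset.sum_congr rfl fun i _ => by rw [Real.norm_eq_abs, sq_abs]

lemma toEuclideanLin_apply' (M : Matrix (Fin n) (Fin n) ℝ) (v : EuclideanSpace ℝ (Fin n))
    (i : Fin n) : Matrix.toEuclideanLin M v i = (M *ᵥ (fun j => v j)) i := rfl

lemma norm_toEuclideanLin_le (M : Matrix (Fin n) (Fin n) ℝ) (v : EuclideanSpace ℝ (Fin n)) :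
    ‖Matrix.toEuclideanLin M v‖ ≤ frobNorm M * ‖v‖ := by
  rw [euclid_norm_eq, euclid_norm_eq, frobNorm, ← Real.sqrt_mul (by positivity)]
  apply Real.sqrt_le_sqrt
  rw [Finset.sum_mul]
  apply Finset.sum_le_sum
  intro i _
  have := Finset.sum_mul_sq_le_sq_mul_sq Finset.univ (fun j => M i j) (fun j => v j)
  simpa [toEuclideanLin_apply', Matrix.mulVec, dotProduct] using this

lemma norm_toEuclideanLin_orth {M : Matrix (Fin n) (Fin n) ℝ} (h : Mᵀ * M = 1)
    (v : EuclideanSpace ℝ (Fin n)) : ‖Matrix.toEuclideanLin M v‖ = ‖v‖ := by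
  rw [euclid_norm_eq, euclid_norm_eq]
  congr 1
  have h1 : ∑ i, (Matrix.toEuclideanLin M v i)^2
      = (M *ᵥ fun j => v j) ⬝ᵥ (M *ᵥ fun j => v j) := by
    simp [dotProduct, sq, toEuclideanLin_apply']
  have h2 : (M *ᵥ fun j => v j) ⬝ᵥ (M *ᵥ fun j => v j)
      = (fun j => v j) ⬝ᵥ (fun j => v j) := by
    rw [dotProduct_mulVec, ← Matrix.vecMul_transpose, Matrix.vecMul_vecMul, h,
      Matrix.vecMul_one]
  have h3 : (fun j => v j) ⬝ᵥ (fun j => v j) = ∑ i, (v i)^2 := by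
    simp [dotProduct, sq]
  rw [h1, h2, h3]

lemma toEuclideanLin_mul (M N : Matrix (Fin n) (Fin n) ℝ) (v : EuclideanSpace ℝ (Fin n)) :
    Matrix.toEuclideanLin (M * N) v = Matrix.toEuclideanLin M (Matrix.toEuclideanLin N v) := by
  rw [Matrix.toEuclideanLin_apply, Matrix.toEuclideanLin_apply, Matrix.toEuclideanLin_apply]
  simp [← Matrix.mulVec_mulVec]

lemma exp_orth {B : Matrix (Fin n) (Fin n) ℝ} (hB : Bᵀ = -B) :
    (NormedSpace.exp B)ᵀ * NormedSpace.exp B = 1 := by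
  rw [← Matrix.exp_transpose, hB,
    ← Matrix.exp_add_of_commute (-B) B ((Commute.refl B).neg_left), neg_add_cancel,
    NormedSpace.exp_zero]

lemma skew_smul {B : Matrix (Fin n) (Fin n) ℝ} (hB : Bᵀ = -B) (t : ℝ) :
    (t • B)ᵀ = -(t • B) := by
  rw [Matrix.transpose_smul, hB, smul_neg]

lemma frobNorm_sub_comm (A B : Matrix (Fin n) (Fin n) ℝ) :
    frobNorm (B - A) = frobNorm (A - B) := by
  unfold frobNorm
  congr 1
  refine Finset.sum_congr rfl fun i _ => Finset.sum_congr rfl fun j _ => ?_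
  simp [Matrix.sub_apply]
  ring

end auxA

section auxB

attribute [local instance]
  Matrix.linftyOpNormedAddCommGroup Matrix.linftyOpNormedSpace
  Matrix.linftyOpNormedRing Matrix.linftyOpNormedAlgebra

variable {n : ℕ}

lemma key_est {A B : Matrix (Fin n) (Fin n) ℝ} (hA : Aᵀ = -A) (hB : Bᵀ = -B)
    (y : EuclideanSpace ℝ (Fin n)) :
    ‖Matrix.toEuclideanLin (NormedSpace.exp A) y
      - Matrix.toEuclideanLin (NormedSpace.exp B) y‖ ≤ frobNorm (A - B) * ‖y‖ := by
  classical
  set ℓ : Matrix (Fin n) (Fin n) ℝ →ₗ[ℝ] EuclideanSpace ℝ (Fin n) :=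
    (LinearMap.applyₗ y).comp Matrix.toEuclideanLin.toLinearMap with hℓ
  set ℓc : Matrix (Fin n) (Fin n) ℝ →L[ℝ] EuclideanSpace ℝ (Fin n) :=
    LinearMap.toContinuousLinearMap ℓ with hℓc
  have hℓapp : ∀ M, ℓc M = Matrix.toEuclideanLin M y := fun M => rfl
  set g : ℝ → EuclideanSpace ℝ (Fin n) :=
    fun t => ℓc (NormedSpace.exp ((1 - t) • A) * NormedSpace.exp (t • B)) with hg
  set D : ℝ → Matrix (Fin n) (Fin n) ℝ :=
    fun t => NormedSpace.exp ((1 - t) • A) * (B - A) * NormedSpace.exp (t • B) with hD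
  have hderiv : ∀ t : ℝ, HasDerivAt g (ℓc (D t)) t := by
    intro t
    have h1 : HasDerivAt (fun u : ℝ => NormedSpace.exp (u • A))
        (A * NormedSpace.exp ((1 - t) • A)) (1 - t) := hasDerivAt_exp_smul_const' A (1 - t)
    have hin : HasDerivAt (fun u : ℝ => 1 - u) (-1 : ℝ) t := by
      simpa using (hasDerivAt_id t).const_sub 1
    have h1' : HasDerivAt (fun u : ℝ => NormedSpace.exp ((1 - u) • A))
        ((-1 : ℝ) • (A * NormedSpace.exp ((1 - t) • A))) t := h1.scomp t hin
    have h2 : HasDerivAt (fun u : ℝ => NormedSpace.exp (u • B))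
        (B * NormedSpace.exp (t • B)) t := hasDerivAt_exp_smul_const' B t
    have hmul := h1'.mul h2
    have hcomm : A * NormedSpace.exp ((1 - t) • A)
        = NormedSpace.exp ((1 - t) • A) * A :=
      (((Commute.refl A).smul_right ((1:ℝ) - t)).exp_right).eq
    have hDval : ((-1 : ℝ) • (A * NormedSpace.exp ((1 - t) • A)))
          * NormedSpace.exp (t • B)
          + NormedSpace.exp ((1 - t) • A) * (B * NormedSpace.exp (t • B)) = D t := by
      rw [hcomm, hD]
      simp only [neg_smul, one_smul, neg_mul, sub_mul, mul_sub, mul_assoc]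
      abel
    have := (ℓc.hasFDerivAt).comp_hasDerivAt t hmul
    rw [hDval] at this
    exact this
  have hbound : ∀ t : ℝ, ‖ℓc (D t)‖ ≤ frobNorm (A - B) * ‖y‖ := by
    intro t
    rw [hℓapp, hD]
    rw [toEuclideanLin_mul, toEuclideanLin_mul,
      norm_toEuclideanLin_orth (exp_orth (skew_smul hA (1 - t)))]
    calc ‖Matrix.toEuclideanLin (B - A)
          (Matrix.toEuclideanLin (NormedSpace.exp (t • B)) y)‖
        ≤ frobNorm (B - A) * ‖Matrix.toEuclideanLin (NormedSpace.exp (t • B)) y‖ :=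
          norm_toEuclideanLin_le _ _
      _ = frobNorm (A - B) * ‖y‖ := by
          rw [frobNorm_sub_comm, norm_toEuclideanLin_orth (exp_orth (skew_smul hB t))]
  have hMVT := norm_image_sub_le_of_norm_deriv_le_segment'
    (f := g) (f' := fun t => ℓc (D t)) (a := (0:ℝ)) (b := 1) (C := frobNorm (A - B) * ‖y‖)
    (fun t _ => (hderiv t).hasDerivWithinAt) (fun t _ => hbound t) 1
    (Set.right_mem_Icc.2 zero_le_one)
  have hg1 : g 1 = Matrix.toEuclideanLin (NormedSpace.exp B) y := by
    rw [hg]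
    simp only [sub_self, zero_smul, one_smul, NormedSpace.exp_zero, Matrix.one_mul]
    exact hℓapp _
  have hg0 : g 0 = Matrix.toEuclideanLin (NormedSpace.exp A) y := by
    rw [hg]
    simp only [sub_zero, zero_smul, one_smul, NormedSpace.exp_zero, Matrix.mul_one]
    exact hℓapp _
  rw [hg1, hg0] at hMVT
  rw [norm_sub_rev]
  simpa using hMVT

end auxB

set_option maxHeartbeats 1000000 in
theorem stmt10 {n : ℕ} (O : Set (EuclideanSpace ℝ (Fin n)))
    (hOne : O.Nonempty) (hOcpt : IsCompact O)
    (δ : ℝ) (hδ : IsLUB ((fun y => ‖y‖) '' O) δ)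
    (s : Set (Matrix (Fin n) (Fin n) ℝ))
    (hs : s = {B | Bᵀ = -B ∧ ∀ t : ℝ,
      (⇑(Matrix.toEuclideanLin (NormedSpace.exp (t • B)))) '' O = O})
    (htrans : ∀ y ∈ O, ∀ z ∈ O, ∃ B ∈ s,
      Matrix.toEuclideanLin (NormedSpace.exp B) y = z)
    (β : ℝ) (hβ : 0 ≤ β)
    (Q : Matrix (Fin n) (Fin n) ℝ) (hQ : Qᵀ * Q = 1)
    (hclose : ∀ B ∈ s, frobNorm (Qᵀ * B * Q - B) ≤ β) :
    ∀ x : EuclideanSpace ℝ (Fin n),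
      Metric.hausdorffDist
        ((fun B => Matrix.toEuclideanLin (NormedSpace.exp (Qᵀ * B * Q)) x) '' s) O ≤
        (β + 1) * Metric.infDist x O + β * δ := by
  intro x
  set d := Metric.infDist x O with hdd
  obtain ⟨y, hyO, hxy⟩ := hOcpt.exists_infDist_eq_dist hOne x
  have hd0 : (0:ℝ) ≤ d := Metric.infDist_nonneg
  have hnorm_le : ∀ z ∈ O, ‖z‖ ≤ δ := fun z hz => hδ.1 ⟨z, hz, rfl⟩
  have hδ0 : 0 ≤ δ := le_trans (norm_nonneg y) (hnorm_le y hyO)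
  have est : ∀ B ∈ s, dist (Matrix.toEuclideanLin (NormedSpace.exp (Qᵀ * B * Q)) x)
      (Matrix.toEuclideanLin (NormedSpace.exp B) y) ≤ d + β * δ := by
    intro B hB
    have hBmem := hB
    rw [hs] at hBmem
    obtain ⟨hBskew, hBact⟩ := hBmem
    have hAskew : (Qᵀ * B * Q)ᵀ = -(Qᵀ * B * Q) := by
      simp [Matrix.transpose_mul, Matrix.transpose_transpose, hBskew, Matrix.mul_assoc,
        Matrix.neg_mul, Matrix.mul_neg]
    have hfrob : frobNorm ((Qᵀ * B * Q) - B) ≤ β := hclose B hB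
    rw [dist_eq_norm]
    have hsplit : Matrix.toEuclideanLin (NormedSpace.exp (Qᵀ * B * Q)) x
          - Matrix.toEuclideanLin (NormedSpace.exp B) y
        = Matrix.toEuclideanLin (NormedSpace.exp (Qᵀ * B * Q)) (x - y)
          + (Matrix.toEuclideanLin (NormedSpace.exp (Qᵀ * B * Q)) y
            - Matrix.toEuclideanLin (NormedSpace.exp B) y) := by
      rw [map_sub]
      abel
    rw [hsplit]
    refine le_trans (norm_add_le _ _) ?_
    have h1 : ‖Matrix.toEuclideanLin (NormedSpace.exp (Qᵀ * B * Q)) (x - y)‖ = ‖x - y‖ :=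
      norm_toEuclideanLin_orth (exp_orth hAskew) _
    have h2 : ‖x - y‖ = d := by rw [← dist_eq_norm, hdd, hxy]
    have h3 := le_trans (key_est hAskew hBskew y)
      (mul_le_mul hfrob (hnorm_le y hyO) (norm_nonneg y) hβ)
    rw [h1, h2]
    linarith
  have hr0 : 0 ≤ (β + 1) * d + β * δ :=
    add_nonneg (mul_nonneg (by linarith) hd0) (mul_nonneg hβ hδ0)
  have hle : d + β * δ ≤ (β + 1) * d + β * δ := by nlinarith [mul_nonneg hβ hd0]
  apply Metric.hausdorffDist_le_of_mem_dist hr0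
  · rintro p ⟨B, hB, rfl⟩
    have hBmem := hB
    rw [hs] at hBmem
    obtain ⟨hBskew, hBact⟩ := hBmem
    refine ⟨Matrix.toEuclideanLin (NormedSpace.exp B) y, ?_, le_trans (est B hB) hle⟩
    have h1 := hBact 1
    rw [one_smul] at h1
    rw [← h1]
    exact Set.mem_image_of_mem _ hyO
  · intro z hz
    obtain ⟨B, hB, hBz⟩ := htrans y hyO z hz
    refine ⟨Matrix.toEuclideanLin (NormedSpace.exp (Qᵀ * B * Q)) x, ⟨B, hB, rfl⟩, ?_⟩
    rw [← hBz, dist_comm]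
    exact le_trans (est B hB) hle
end

section
/- Let d ≥ 1, n = 2d, p ≥ 1, and let ω ∈ ℤ^d satisfy: p does not divide 2ω_i for any i, and for all i ≠ j, p divides neither ω_i − ω_j nor ω_i + ω_j. Let x ∈ ℝⁿ and, for m = 0,…,p−1, let x_m ∈ ℝⁿ be the vector whose (2i−1)-st and 2i-th coordinates are cos(2πmω_i/p)·x_{2i−1} − sin(2πmω_i/p)·x_{2i} and sin(2πmω_i/p)·x_{2i−1} + cos(2πmω_i/p)·x_{2i}, i.e., x_m is obtained from x by applying the block-diagonal rotation diag(R(2πmω_1/p),…,R(2πmω_d/p)). Then the empirical covariance matrix (1/p)·Σ_{m=0}^{p−1} x_m x_mᵀ equals the diagonal matrix (1/2)·diag(x_1²+x_2², x_1²+x_2², …, x_{2d−1}²+x_{2d}², x_{2d−1}²+x_{2d}²), in which each value (x_{2i−1}²+x_{2i}²)/2 appears twice, in positions 2i−1 and 2i. -/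
/-- The vector obtained from `x ∈ ℝ^{2d}` (with coordinates indexed by `Fin d × Fin 2`)
by applying the block-diagonal rotation `diag(R(2πmω₁/p),…,R(2πmω_d/p))`. -/
noncomputable def rotatedVec {d : ℕ} (ω : Fin d → ℤ) (p : ℕ)
    (x : Fin d × Fin 2 → ℝ) (m : ℕ) : Fin d × Fin 2 → ℝ :=
  fun q =>
    if q.2 = 0 then
      Real.cos (2 * Real.pi * (m : ℝ) * ((ω q.1 : ℤ) : ℝ) / (p : ℝ)) * x (q.1, 0) -
        Real.sin (2 * Real.pi * (m : ℝ) * ((ω q.1 : ℤ) : ℝ) / (p : ℝ)) * x (q.1, 1)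
    else
      Real.sin (2 * Real.pi * (m : ℝ) * ((ω q.1 : ℤ) : ℝ) / (p : ℝ)) * x (q.1, 0) +
        Real.cos (2 * Real.pi * (m : ℝ) * ((ω q.1 : ℤ) : ℝ) / (p : ℝ)) * x (q.1, 1)

lemma sum_exp_eq_zero (p : ℕ) (hp : 1 ≤ p) (k : ℤ) (hk : ¬ (p:ℤ) ∣ k) :
    ∑ m ∈ Finset.range p, Complex.exp (2 * Real.pi * Complex.I * m * k / p) = 0 := by
  have hp0 : (p:ℂ) ≠ 0 := Nat.cast_ne_zero.mpr (by omega)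
  have h2 : (2 * (Real.pi:ℂ) * Complex.I) ≠ 0 := by
    simp [Real.pi_ne_zero, Complex.I_ne_zero]
  set ζ : ℂ := Complex.exp (2 * Real.pi * Complex.I * k / p) with hζ
  have hζm : ∀ m : ℕ, Complex.exp (2 * Real.pi * Complex.I * m * k / p) = ζ ^ m := by
    intro m
    rw [hζ, ← Complex.exp_nat_mul]
    ring_nf
  have hζ1 : ζ ≠ 1 := by
    intro h
    rw [hζ, Complex.exp_eq_one_iff] at h
    obtain ⟨n, hn⟩ := h
    apply hk
    refine ⟨n, ?_⟩
    have hkc : (k : ℂ) = p * n := by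
      have hn' : (2*(Real.pi:ℂ)*Complex.I) * k = (2*(Real.pi:ℂ)*Complex.I) * ((p:ℂ)*n) := by
        field_simp at hn
        linear_combination (2*(Real.pi:ℂ)*Complex.I) * hn
      exact mul_left_cancel₀ h2 hn'
    exact_mod_cast hkc
  have hζp : ζ ^ p = 1 := by
    rw [hζ, ← Complex.exp_nat_mul]
    rw [show (p:ℂ) * (2 * Real.pi * Complex.I * k / p) = k * (2 * Real.pi * Complex.I) by
      field_simp]
    exact Complex.exp_int_mul_two_pi_mul_I k
  simp only [hζm]
  rw [geom_sum_eq hζ1, hζp]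
  simp

lemma sum_cos_eq_zero (p : ℕ) (hp : 1 ≤ p) (k : ℤ) (hk : ¬ (p:ℤ) ∣ k) :
    ∑ m ∈ Finset.range p, Real.cos (2 * Real.pi * m * (k:ℝ) / p) = 0 := by
  have h := sum_exp_eq_zero p hp k hk
  have he : ∀ m : ℕ, Real.cos (2 * Real.pi * m * (k:ℝ) / p)
      = (Complex.exp (2 * Real.pi * Complex.I * m * k / p)).re := by
    intro m
    rw [show (2 * Real.pi * Complex.I * m * k / p : ℂ)
        = ((2 * Real.pi * m * (k:ℝ) / p : ℝ) : ℂ) * Complex.I by push_cast; ring,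
      Complex.exp_ofReal_mul_I_re]
  simp only [he, ← Complex.re_sum, h, Complex.zero_re]

lemma sum_sin_eq_zero (p : ℕ) (hp : 1 ≤ p) (k : ℤ) (hk : ¬ (p:ℤ) ∣ k) :
    ∑ m ∈ Finset.range p, Real.sin (2 * Real.pi * m * (k:ℝ) / p) = 0 := by
  have h := sum_exp_eq_zero p hp k hk
  have he : ∀ m : ℕ, Real.sin (2 * Real.pi * m * (k:ℝ) / p)
      = (Complex.exp (2 * Real.pi * Complex.I * m * k / p)).im := by
    intro m
    rw [show (2 * Real.pi * Complex.I * m * k / p : ℂ)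
        = ((2 * Real.pi * m * (k:ℝ) / p : ℝ) : ℂ) * Complex.I by push_cast; ring,
      Complex.exp_ofReal_mul_I_im]
  simp only [he, ← Complex.im_sum, h, Complex.zero_im]

lemma sum_cos_zero (p : ℕ) :
    ∑ m ∈ Finset.range p, Real.cos (2 * Real.pi * m * (((0:ℤ)):ℝ) / p) = p := by
  simp

lemma sum_sin_zero (p : ℕ) :
    ∑ m ∈ Finset.range p, Real.sin (2 * Real.pi * m * (((0:ℤ)):ℝ) / p) = 0 := by
  simp

lemma key_sum (p : ℕ) (a b : ℤ) (X0 X1 Y0 Y1 : ℝ) :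
    ∑ m ∈ Finset.range p,
      (Real.cos (2*Real.pi*m*(a:ℝ)/p) * X0 + Real.sin (2*Real.pi*m*(a:ℝ)/p) * X1) *
      (Real.cos (2*Real.pi*m*(b:ℝ)/p) * Y0 + Real.sin (2*Real.pi*m*(b:ℝ)/p) * Y1)
    = (X0*Y0 + X1*Y1)/2 * (∑ m ∈ Finset.range p, Real.cos (2*Real.pi*m*((a-b:ℤ):ℝ)/p))
    + (X0*Y0 - X1*Y1)/2 * (∑ m ∈ Finset.range p, Real.cos (2*Real.pi*m*((a+b:ℤ):ℝ)/p))
    + (X1*Y0 - X0*Y1)/2 * (∑ m ∈ Finset.range p, Real.sin (2*Real.pi*m*((a-b:ℤ):ℝ)/p))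
    + (X1*Y0 + X0*Y1)/2 * (∑ m ∈ Finset.range p, Real.sin (2*Real.pi*m*((a+b:ℤ):ℝ)/p)) := by
  simp only [Finset.mul_sum, ← Finset.sum_add_distrib]
  refine Finset.sum_congr rfl fun m _ => ?_
  have h1 : 2*Real.pi*m*((a-b:ℤ):ℝ)/p = 2*Real.pi*m*(a:ℝ)/p - 2*Real.pi*m*(b:ℝ)/p := by
    push_cast; ring
  have h2 : 2*Real.pi*m*((a+b:ℤ):ℝ)/p = 2*Real.pi*m*(a:ℝ)/p + 2*Real.pi*m*(b:ℝ)/p := by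
    push_cast; ring
  rw [h1, h2, Real.cos_sub, Real.cos_add, Real.sin_sub, Real.sin_add]
  ring

theorem stmt12 {d : ℕ} (hd : 1 ≤ d) (p : ℕ) (hp : 1 ≤ p) (ω : Fin d → ℤ)
    (hω1 : ∀ i, ¬ ((p : ℤ) ∣ 2 * ω i))
    (hω2 : ∀ i j, i ≠ j → ¬ ((p : ℤ) ∣ ω i - ω j))
    (hω3 : ∀ i j, i ≠ j → ¬ ((p : ℤ) ∣ ω i + ω j))
    (x : Fin d × Fin 2 → ℝ) :
    ((p : ℝ))⁻¹ • ∑ m ∈ Finset.range p,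
        Matrix.vecMulVec (rotatedVec ω p x m) (rotatedVec ω p x m) =
      Matrix.diagonal (fun q : Fin d × Fin 2 =>
        (x (q.1, 0) ^ 2 + x (q.1, 1) ^ 2) / 2) := by
  have hp0 : (p:ℝ) ≠ 0 := Nat.cast_ne_zero.mpr (by omega)
  have unfold0 : ∀ (m : ℕ) (i : Fin d), rotatedVec ω p x m (i, 0)
      = Real.cos (2 * Real.pi * m * ((ω i : ℤ):ℝ) / p) * x (i,0)
        + Real.sin (2 * Real.pi * m * ((ω i : ℤ):ℝ) / p) * (-(x (i,1))) := by
    intro m i; simp only [rotatedVec]; norm_num; ring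
  have unfold1 : ∀ (m : ℕ) (i : Fin d), rotatedVec ω p x m (i, 1)
      = Real.cos (2 * Real.pi * m * ((ω i : ℤ):ℝ) / p) * x (i,1)
        + Real.sin (2 * Real.pi * m * ((ω i : ℤ):ℝ) / p) * x (i,0) := by
    intro m i; simp only [rotatedVec]; norm_num; ring
  ext ⟨i,a⟩ ⟨j,b⟩
  simp only [Matrix.smul_apply, Matrix.sum_apply, Matrix.vecMulVec_apply, smul_eq_mul,
    Matrix.diagonal_apply]
  by_cases hij : i = j
  · subst hij
    fin_cases a <;> fin_cases b <;>
      simp only [Fin.zero_eta, Fin.mk_one, unfold0, unfold1, key_sum, sub_self, ← two_mul, sum_cos_zero, sum_sin_zero,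
        sum_cos_eq_zero p hp (2 * ω i) (hω1 i), sum_sin_eq_zero p hp (2 * ω i) (hω1 i)] <;>
      (try simp [Prod.ext_iff]) <;>
      first
        | tauto
        | (right; left; ring)
        | (rw [mul_comm, mul_assoc, mul_inv_cancel₀ hp0]; ring1)
        | (field_simp; ring)
        | ring
  · fin_cases a <;> fin_cases b <;>
      simp only [Fin.zero_eta, Fin.mk_one, unfold0, unfold1, key_sum,
        sum_cos_eq_zero p hp (ω i - ω j) (hω2 i j hij), sum_sin_eq_zero p hp (ω i - ω j) (hω2 i j hij),
        sum_cos_eq_zero p hp (ω i + ω j) (hω3 i j hij), sum_sin_eq_zero p hp (ω i + ω j) (hω3 i j hij)] <;>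
      (try simp [Prod.ext_iff, hij]) <;>
      first
        | tauto
        | (right; left; ring)
        | (field_simp; ring)
        | ring
end

section
/- Let ℳ ⊂ ℝⁿ be a nonempty compact C² embedded submanifold (without boundary), and for x ∈ ℳ let T_xℳ ⊂ ℝⁿ denote its tangent space at x, viewed as a linear subspace of ℝⁿ. Then for every real n×n matrix A, the following are equivalent: (i) exp(tA)·ℳ = ℳ for every t ∈ ℝ; (ii) A x ∈ T_xℳ for every x ∈ ℳ. That is, the Lie algebra of the symmetry group Sym(ℳ) = {P ∈ GLₙ(ℝ) : P·ℳ = ℳ} equals {A ∈ Mₙ(ℝ) : ∀x ∈ ℳ, Ax ∈ T_xℳ}. -/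
open scoped Manifold
open Metric
set_option maxHeartbeats 1000000

section Aux

noncomputable def stmt16.mCont {n : ℕ} : Continuous (⇑(Matrix.toEuclideanCLM (𝕜 := ℝ) (n := Fin n))) :=
    LinearMap.continuous_of_finiteDimensional
      ((Matrix.toEuclideanLin.trans LinearMap.toContinuousLinearMap) :
      Matrix (Fin n) (Fin n) ℝ ≃ₗ[ℝ] (EuclideanSpace ℝ (Fin n) →L[ℝ] EuclideanSpace ℝ (Fin n))).toLinearMap

open scoped Matrix.Norms.L2Operator in
theorem stmt16.expCLM {n : ℕ} (B : Matrix (Fin n) (Fin n) ℝ) :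
    Matrix.toEuclideanCLM (𝕜 := ℝ) (NormedSpace.exp B) = NormedSpace.exp (Matrix.toEuclideanCLM (𝕜 := ℝ) B) :=
  NormedSpace.map_exp_of_mem_ball (𝕂 := ℝ) (Matrix.toEuclideanCLM (𝕜 := ℝ)) stmt16.mCont B
    ((NormedSpace.expSeries_radius_eq_top ℝ (Matrix (Fin n) (Fin n) ℝ)).symm ▸ edist_lt_top _ _)

theorem stmt16.flow_hasDerivAt {n : ℕ}
    (L : EuclideanSpace ℝ (Fin n) →L[ℝ] EuclideanSpace ℝ (Fin n))
    (y : EuclideanSpace ℝ (Fin n)) (t : ℝ) :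
    HasDerivAt (fun s : ℝ => NormedSpace.exp (s • L) y)
      (L (NormedSpace.exp (t • L) y)) t := by
  have hd := hasDerivAt_exp_smul_const' L t
  exact (ContinuousLinearMap.apply ℝ (EuclideanSpace ℝ (Fin n)) y).hasFDerivAt.comp_hasDerivAt t hd

theorem stmt16.exp_zero_apply {n : ℕ}
    (L : EuclideanSpace ℝ (Fin n) →L[ℝ] EuclideanSpace ℝ (Fin n))
    (y : EuclideanSpace ℝ (Fin n)) : (NormedSpace.exp ((0:ℝ) • L)) y = y := by
  have h : (0:ℝ) • L = 0 := zero_smul ℝ L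
  rw [h, NormedSpace.exp_zero]
  rfl

variable {n d : ℕ} {M : Set (EuclideanSpace ℝ (Fin n))}
    [ChartedSpace (EuclideanSpace ℝ (Fin d)) M]

theorem curveLemma
    (hsmooth : ContMDiff (𝓡 d) 𝓘(ℝ, EuclideanSpace ℝ (Fin n)) 2
      ((↑) : M → EuclideanSpace ℝ (Fin n)))
    (x' : M) (v : EuclideanSpace ℝ (Fin n))
    (hv : v ∈ Set.range (mfderiv (𝓡 d) 𝓘(ℝ, EuclideanSpace ℝ (Fin n))
          ((↑) : M → EuclideanSpace ℝ (Fin n)) x')) :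
    ∃ γ : ℝ → EuclideanSpace ℝ (Fin n), γ 0 = (x' : EuclideanSpace ℝ (Fin n)) ∧
      (∀ᶠ h in nhds (0:ℝ), γ h ∈ M) ∧ HasDerivAt γ v 0 := by
  obtain ⟨u₀, hu⟩ := hv
  let u : EuclideanSpace ℝ (Fin d) := u₀
  have hu' : (mfderiv (𝓡 d) 𝓘(ℝ, EuclideanSpace ℝ (Fin n))
      ((↑) : M → EuclideanSpace ℝ (Fin n)) x' : EuclideanSpace ℝ (Fin d) →L[ℝ]
      EuclideanSpace ℝ (Fin n)) u = v := hu
  clear hu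
  set e := extChartAt (𝓡 d) x' with he
  set g : EuclideanSpace ℝ (Fin d) → EuclideanSpace ℝ (Fin n) :=
    fun p => ((e.symm p : M) : EuclideanSpace ℝ (Fin n)) with hg
  have hgd : HasFDerivAt g
      (mfderiv (𝓡 d) 𝓘(ℝ, EuclideanSpace ℝ (Fin n)) ((↑) : M → EuclideanSpace ℝ (Fin n)) x')
      (e x') := by
    have h1 : MDifferentiableAt (𝓡 d) 𝓘(ℝ, EuclideanSpace ℝ (Fin n))
        ((↑) : M → EuclideanSpace ℝ (Fin n)) x' := (hsmooth x').mdifferentiableAt two_ne_zero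
    have h2 := h1.hasMFDerivAt
    rw [HasMFDerivAt] at h2
    obtain ⟨-, h3⟩ := h2
    rw [writtenInExtChartAt, extChartAt_model_space_eq_id] at h3
    simp only [PartialEquiv.refl_coe, Function.comp_def, Function.id_def, id_eq] at h3
    have h4 : Set.range (𝓡 d) = Set.univ := by simp
    rw [h4] at h3
    exact hasFDerivWithinAt_univ.mp h3
  refine ⟨fun h => g (e x' + h • u), ?_, ?_, ?_⟩
  · simp only [zero_smul, add_zero, hg]
    rw [he]
    rw [extChartAt_to_inv]
  · have hopen : IsOpen e.target := isOpen_extChartAt_target x'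
    have hmem : e x' ∈ e.target := mem_extChartAt_target x'
    have hc : ContinuousAt (fun h : ℝ => e x' + h • u) 0 := by fun_prop
    have hev : ∀ᶠ h in nhds (0:ℝ), e x' + h • u ∈ e.target := by
      have := hc.preimage_mem_nhds (hopen.mem_nhds (by simpa using hmem))
      exact this
    filter_upwards [hev] with h _
    exact Subtype.coe_prop _
  · have hline : HasDerivAt (fun h : ℝ => e x' + h • u) u 0 := by
      simpa using ((hasDerivAt_id (0:ℝ)).smul_const u).const_add (e x')
    have hgd' : HasFDerivAt g
      (mfderiv (𝓡 d) 𝓘(ℝ, EuclideanSpace ℝ (Fin n)) ((↑) : M → EuclideanSpace ℝ (Fin n)) x')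
      (e x' + (0:ℝ) • u) := by simpa using hgd
    have := hgd'.comp_hasDerivAt 0 hline
    rw [← hu']
    exact this

theorem invariance_half
    (hMne : M.Nonempty) (hMcpt : IsCompact M)
    (hsmooth : ContMDiff (𝓡 d) 𝓘(ℝ, EuclideanSpace ℝ (Fin n)) 2
      ((↑) : M → EuclideanSpace ℝ (Fin n)))
    (L : EuclideanSpace ℝ (Fin n) →L[ℝ] EuclideanSpace ℝ (Fin n))
    (hA : ∀ x' : M, L (x' : EuclideanSpace ℝ (Fin n)) ∈
      Set.range (mfderiv (𝓡 d) 𝓘(ℝ, EuclideanSpace ℝ (Fin n))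
        ((↑) : M → EuclideanSpace ℝ (Fin n)) x'))
    {x₀ : EuclideanSpace ℝ (Fin n)} (hx₀ : x₀ ∈ M) {t : ℝ} (ht : 0 ≤ t) :
    NormedSpace.exp (t • L) x₀ ∈ M := by
  set c : ℝ → EuclideanSpace ℝ (Fin n) := fun s => NormedSpace.exp (s • L) x₀ with hc_def
  have hc : ∀ s, HasDerivAt c (L (c s)) s := by
    intro s
    have hd := hasDerivAt_exp_smul_const' L s
    exact (ContinuousLinearMap.apply ℝ (EuclideanSpace ℝ (Fin n)) x₀).hasFDerivAt.comp_hasDerivAt s hd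
  have hccont : Continuous c := by
    rw [continuous_iff_continuousAt]; exact fun s => (hc s).continuousAt
  set f : ℝ → ℝ := fun s => infDist (c s) M with hf_def
  have hf0 : f 0 = 0 := by
    have : c 0 = x₀ := by
      rw [hc_def]
      have h : (0:ℝ) • L = 0 := zero_smul ℝ L
      simp only [h, NormedSpace.exp_zero, ContinuousLinearMap.one_apply]
    rw [hf_def]; simp only [this]; exact infDist_zero_of_mem hx₀
  have key : ∀ s : ℝ, ∀ r, ‖L‖ * f s < r →
      ∀ᶠ z in nhdsWithin s (Set.Ioi s), (z - s)⁻¹ * (f z - f s) < r := by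
    intro s r hr
    obtain ⟨x, hxM, hxdist⟩ := hMcpt.exists_infDist_eq_dist hMne (c s)
    have hfs : f s = ‖c s - x‖ := by rw [hf_def]; simp only []; rw [hxdist, dist_eq_norm]
    set ε₁ := (r - ‖L‖ * f s)/3 with hε₁def
    have hε₁pos : 0 < ε₁ := by rw [hε₁def]; linarith
    obtain ⟨γ, hγ0, hγM, hγd⟩ := curveLemma hsmooth ⟨x, hxM⟩ (L x) (hA ⟨x, hxM⟩)
    have h1 : (fun z => c z - c s - (z - s) • L (c s)) =o[nhds s] fun z => z - s :=
      hasDerivAt_iff_isLittleO.mp (hc s)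
    have h2 : (fun h => γ h - x - h • L x) =o[nhds (0:ℝ)] fun h => h := by
      have := hasDerivAt_iff_isLittleO.mp hγd
      simpa [hγ0] using this
    have hb1 := h1.bound hε₁pos
    have hb2 := h2.bound hε₁pos
    have hmap : Filter.Tendsto (fun z : ℝ => z - s) (nhdsWithin s (Set.Ioi s)) (nhds 0) := by
      have : Filter.Tendsto (fun z : ℝ => z - s) (nhds s) (nhds (s - s)) :=
        (continuous_id.sub continuous_const).tendsto s
      simpa using this.mono_left nhdsWithin_le_nhds
    filter_upwards [hb1.filter_mono nhdsWithin_le_nhds, hmap.eventually hb2,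
      hmap.eventually hγM, self_mem_nhdsWithin] with z hz1 hz2 hz3 hz
    have hh : 0 < z - s := sub_pos.mpr hz
    have hfz : f z ≤ dist (c z) (γ (z - s)) := infDist_le_dist_of_mem hz3
    have e1 : ‖c z - (c s + (z - s) • L (c s))‖ ≤ ε₁ * (z - s) := by
      have : c z - (c s + (z - s) • L (c s)) = c z - c s - (z - s) • L (c s) := by abel
      rw [this]
      calc ‖c z - c s - (z - s) • L (c s)‖ ≤ ε₁ * ‖z - s‖ := hz1
      _ = ε₁ * (z - s) := by rw [Real.norm_eq_abs, abs_of_pos hh]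
    have e3 : ‖(x + (z - s) • L x) - γ (z - s)‖ ≤ ε₁ * (z - s) := by
      rw [norm_sub_rev]
      have : γ (z - s) - (x + (z - s) • L x) = γ (z - s) - x - (z - s) • L x := by abel
      rw [this]
      calc ‖γ (z - s) - x - (z - s) • L x‖ ≤ ε₁ * ‖z - s‖ := hz2
      _ = ε₁ * (z - s) := by rw [Real.norm_eq_abs, abs_of_pos hh]
    have e2 : ‖(c s + (z - s) • L (c s)) - (x + (z - s) • L x)‖
        ≤ f s + (z - s) * (‖L‖ * f s) := by
      have heq : (c s + (z - s) • L (c s)) - (x + (z - s) • L x)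
          = (c s - x) + (z - s) • L (c s - x) := by
        rw [map_sub]; rw [smul_sub]; abel
      rw [heq]
      calc ‖(c s - x) + (z - s) • L (c s - x)‖
          ≤ ‖c s - x‖ + ‖(z - s) • L (c s - x)‖ := norm_add_le _ _
        _ = ‖c s - x‖ + |z - s| * ‖L (c s - x)‖ := by rw [norm_smul, Real.norm_eq_abs]
        _ ≤ ‖c s - x‖ + (z - s) * (‖L‖ * ‖c s - x‖) := by
            have := L.le_opNorm (c s - x)
            rw [abs_of_pos hh]
            nlinarith [hh.le]
        _ = f s + (z - s) * (‖L‖ * f s) := by rw [hfs]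
    have hdist : dist (c z) (γ (z - s)) ≤ f s + (z - s) * (‖L‖ * f s + 2 * ε₁) := by
      calc dist (c z) (γ (z - s))
          ≤ dist (c z) (c s + (z - s) • L (c s)) + dist (c s + (z - s) • L (c s)) (γ (z - s)) :=
            dist_triangle _ _ _
        _ ≤ dist (c z) (c s + (z - s) • L (c s)) + (dist (c s + (z - s) • L (c s)) (x + (z - s) • L x) + dist (x + (z - s) • L x) (γ (z - s))) := by
            have := dist_triangle (c s + (z - s) • L (c s)) (x + (z - s) • L x) (γ (z - s))
            linarith
        _ ≤ ε₁ * (z - s) + ((f s + (z - s) * (‖L‖ * f s)) + ε₁ * (z - s)) := by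
            rw [dist_eq_norm, dist_eq_norm, dist_eq_norm]
            have := e1; have := e2; have := e3
            gcongr
        _ = f s + (z - s) * (‖L‖ * f s + 2 * ε₁) := by ring
    have hslope : f z - f s ≤ (z - s) * (‖L‖ * f s + 2 * ε₁) := by
      have := hfz.trans hdist; linarith
    calc (z - s)⁻¹ * (f z - f s) ≤ (z - s)⁻¹ * ((z - s) * (‖L‖ * f s + 2 * ε₁)) := by
          apply mul_le_mul_of_nonneg_left hslope (inv_nonneg.mpr hh.le)
      _ = ‖L‖ * f s + 2 * ε₁ := by rw [inv_mul_cancel_left₀ hh.ne']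
      _ < r := by rw [hε₁def]; linarith
  have hg := le_gronwallBound_of_liminf_deriv_right_le (f := f) (f' := fun s => ‖L‖ * f s)
    (δ := 0) (K := ‖L‖) (ε := 0) (a := 0) (b := t)
    ((continuous_infDist_pt M).comp hccont).continuousOn
    (fun s _ r hr => (key s r hr).frequently)
    (le_of_eq hf0)
    (fun s _ => le_of_eq (add_zero _).symm)
  have hft := hg t ⟨ht, le_refl t⟩
  rw [sub_zero, gronwallBound_ε0, zero_mul] at hft
  have : f t = 0 := le_antisymm hft infDist_nonneg
  exact ((hMcpt.isClosed).mem_iff_infDist_zero hMne).mpr this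

theorem tangent_of_curve
    (hsmooth : ContMDiff (𝓡 d) 𝓘(ℝ, EuclideanSpace ℝ (Fin n)) 2
      ((↑) : M → EuclideanSpace ℝ (Fin n)))
    (himm : ∀ x : M, Function.Injective
      (mfderiv (𝓡 d) 𝓘(ℝ, EuclideanSpace ℝ (Fin n))
        ((↑) : M → EuclideanSpace ℝ (Fin n)) x))
    (x' : M) (c : ℝ → EuclideanSpace ℝ (Fin n)) (v : EuclideanSpace ℝ (Fin n))
    (hc0 : c 0 = (x' : EuclideanSpace ℝ (Fin n)))
    (hcM : ∀ᶠ h in nhds (0:ℝ), c h ∈ M)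
    (hcd : HasDerivAt c v 0) :
    v ∈ Set.range (mfderiv (𝓡 d) 𝓘(ℝ, EuclideanSpace ℝ (Fin n))
          ((↑) : M → EuclideanSpace ℝ (Fin n)) x') := by
  classical
  set e := extChartAt (𝓡 d) x' with he
  set Df : EuclideanSpace ℝ (Fin d) →L[ℝ] EuclideanSpace ℝ (Fin n) :=
    mfderiv (𝓡 d) 𝓘(ℝ, EuclideanSpace ℝ (Fin n)) ((↑) : M → EuclideanSpace ℝ (Fin n)) x'
    with hDf
  set g : EuclideanSpace ℝ (Fin d) → EuclideanSpace ℝ (Fin n) :=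
    fun p => ((e.symm p : M) : EuclideanSpace ℝ (Fin n)) with hg
  -- g has strict derivative Df at p₀ := e x'
  have hgd : HasFDerivAt g Df (e x') := by
    have h1 : MDifferentiableAt (𝓡 d) 𝓘(ℝ, EuclideanSpace ℝ (Fin n))
        ((↑) : M → EuclideanSpace ℝ (Fin n)) x' := (hsmooth x').mdifferentiableAt two_ne_zero
    have h2 := h1.hasMFDerivAt
    rw [HasMFDerivAt] at h2
    obtain ⟨-, h3⟩ := h2
    rw [writtenInExtChartAt, extChartAt_model_space_eq_id] at h3
    simp only [PartialEquiv.refl_coe, Function.comp_def, Function.id_def, id_eq] at h3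
    have h4 : Set.range (𝓡 d) = Set.univ := by simp
    rw [h4] at h3
    exact hasFDerivWithinAt_univ.mp h3
  have hgc : ContDiffAt ℝ 2 g (e x') := by
    have h1 := (contMDiffAt_iff.mp (hsmooth x')).2
    rw [extChartAt_model_space_eq_id] at h1
    simp only [PartialEquiv.refl_coe, Function.comp_def, Function.id_def, id_eq] at h1
    have h4 : Set.range (𝓡 d) = Set.univ := by simp
    rw [h4, contDiffWithinAt_univ] at h1
    exact h1
  have hst : HasStrictFDerivAt g Df (e x') := hgc.hasStrictFDerivAt' hgd two_ne_zero
  -- the complement space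
  set K : Submodule ℝ (EuclideanSpace ℝ (Fin n)) := LinearMap.range (Df : EuclideanSpace ℝ (Fin d) →ₗ[ℝ] EuclideanSpace ℝ (Fin n)) with hK
  set W := Kᗮ with hW
  -- the combined map Φ and its derivative T
  set T : (EuclideanSpace ℝ (Fin d) × W) →L[ℝ] EuclideanSpace ℝ (Fin n) :=
    Df.comp (ContinuousLinearMap.fst ℝ _ _) + W.subtypeL.comp (ContinuousLinearMap.snd ℝ _ _)
    with hT
  have hTapp : ∀ q : EuclideanSpace ℝ (Fin d) × W, T q = Df q.1 + (q.2 : EuclideanSpace ℝ (Fin n)) :=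
    fun q => rfl
  have hTbij : Function.Bijective T := by
    constructor
    · intro a b hab
      have hab' : Df a.1 + (a.2 : EuclideanSpace ℝ (Fin n))
          = Df b.1 + (b.2 : EuclideanSpace ℝ (Fin n)) := by
        rw [← hTapp, ← hTapp, hab]
      have h0 : Df a.1 - Df b.1
          = ((b.2 : EuclideanSpace ℝ (Fin n)) - (a.2 : EuclideanSpace ℝ (Fin n))) := by
        rw [sub_eq_sub_iff_add_eq_add, hab', add_comm]
      have hKmem : Df a.1 - Df b.1 ∈ K := by
        rw [← map_sub]; exact ⟨a.1 - b.1, rfl⟩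
      have hWmem : Df a.1 - Df b.1 ∈ W := by
        rw [h0]; exact sub_mem b.2.2 a.2.2
      have hzero : Df a.1 - Df b.1 = 0 := by
        have hd := K.orthogonal_disjoint
        have hle := hd.le_bot (α := Submodule ℝ (EuclideanSpace ℝ (Fin n)))
        have : Df a.1 - Df b.1 ∈ K ⊓ Kᗮ := ⟨hKmem, hWmem⟩
        exact (Submodule.mem_bot ℝ).mp (hle this)
      have h1 : a.1 = b.1 := himm x' (sub_eq_zero.mp hzero)
      have h2 : a.2 = b.2 := by
        apply Subtype.ext
        have : (a.2 : EuclideanSpace ℝ (Fin n)) = (b.2 : EuclideanSpace ℝ (Fin n)) := by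
          have := hab'; rw [h1] at this; exact add_left_cancel this
        exact this
      exact Prod.ext h1 h2
    · intro y
      have hy : y ∈ K ⊔ Kᗮ := by
        rw [Submodule.sup_orthogonal_of_hasOrthogonalProjection]; trivial
      obtain ⟨u, hu, w, hw, huw⟩ := Submodule.mem_sup.mp hy
      obtain ⟨p, hp⟩ := hu
      refine ⟨(p, ⟨w, hw⟩), ?_⟩
      rw [hTapp]; simp only []; rw [← huw, ← hp]; rfl
  -- upgrade T to a continuous linear equivalence
  set Tl : (EuclideanSpace ℝ (Fin d) × W) ≃ₗ[ℝ] EuclideanSpace ℝ (Fin n) :=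
    LinearEquiv.ofBijective (T : _ →ₗ[ℝ] _) hTbij with hTl
  set Te : (EuclideanSpace ℝ (Fin d) × W) ≃L[ℝ] EuclideanSpace ℝ (Fin n) :=
    Tl.toContinuousLinearEquiv with hTe
  have hTecoe : ∀ q, Te q = T q := fun q => rfl
  -- Φ and its strict derivative
  set Φ : (EuclideanSpace ℝ (Fin d) × W) → EuclideanSpace ℝ (Fin n) :=
    fun q => g q.1 + (q.2 : EuclideanSpace ℝ (Fin n)) with hΦ
  have hΦst : HasStrictFDerivAt Φ (Te : (EuclideanSpace ℝ (Fin d) × W) →L[ℝ] _) (e x', (0 : W)) := by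
    have hfst : HasStrictFDerivAt (Prod.fst : EuclideanSpace ℝ (Fin d) × W → EuclideanSpace ℝ (Fin d))
        (ContinuousLinearMap.fst ℝ (EuclideanSpace ℝ (Fin d)) W) (e x', (0 : W)) :=
      (ContinuousLinearMap.fst ℝ (EuclideanSpace ℝ (Fin d)) W).hasStrictFDerivAt
    have h1 : HasStrictFDerivAt (fun q : EuclideanSpace ℝ (Fin d) × W => g q.1)
        (Df.comp (ContinuousLinearMap.fst ℝ _ _)) (e x', (0 : W)) :=
      HasStrictFDerivAt.comp ((e x'), (0 : W)) hst hfst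
    have h2 : HasStrictFDerivAt (fun q : EuclideanSpace ℝ (Fin d) × W =>
        (q.2 : EuclideanSpace ℝ (Fin n)))
        (W.subtypeL.comp (ContinuousLinearMap.snd ℝ _ _)) (e x', (0 : W)) := by
      have := (W.subtypeL.comp
        (ContinuousLinearMap.snd ℝ (EuclideanSpace ℝ (Fin d)) W)).hasStrictFDerivAt
        (x := (e x', (0 : W)))
      exact this
    have h3 := h1.add h2
    have hcoe : (Te : (EuclideanSpace ℝ (Fin d) × W) →L[ℝ] EuclideanSpace ℝ (Fin n)) = T := by
      apply ContinuousLinearMap.ext; intro q; exact hTecoe q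
    rw [hcoe, hT]
    exact h3
  set φ := hΦst.toOpenPartialHomeomorph Φ with hφ
  have hφcoe : ⇑φ = Φ := hΦst.toOpenPartialHomeomorph_coe
  have hsrc : (e x', (0 : W)) ∈ φ.source := hΦst.mem_toOpenPartialHomeomorph_source
  have hgp0 : g (e x') = (x' : EuclideanSpace ℝ (Fin n)) := by
    rw [hg]; simp only []
    rw [he, extChartAt_to_inv]
  -- local description of M near x'
  have evM : ∀ᶠ y in nhds (x' : EuclideanSpace ℝ (Fin n)),
      y ∈ M → ∃ q, (q, (0 : W)) ∈ φ.source ∧ Φ (q, (0 : W)) = y := by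
    have hcont : ContinuousAt (fun m : M => ((e m : EuclideanSpace ℝ (Fin d)), (0 : W))) x' :=
      (continuousAt_extChartAt x').prodMk continuousAt_const
    have hop : IsOpen φ.source := φ.open_source
    have hU : (fun m : M => ((e m : EuclideanSpace ℝ (Fin d)), (0 : W))) ⁻¹' φ.source ∈ nhds x' :=
      hcont.preimage_mem_nhds (hop.mem_nhds hsrc)
    have hU2 : e.source ∈ nhds x' := extChartAt_source_mem_nhds x'
    have hU3 := Filter.inter_mem hU hU2
    rw [nhds_subtype_eq_comap, Filter.mem_comap] at hU3
    obtain ⟨V, hV, hVsub⟩ := hU3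
    filter_upwards [hV] with y hy hyM
    have hmem := hVsub (show (⟨y, hyM⟩ : M) ∈ Subtype.val ⁻¹' V from hy)
    refine ⟨e ⟨y, hyM⟩, hmem.1, ?_⟩
    show g (e ⟨y, hyM⟩) + ((0 : W) : EuclideanSpace ℝ (Fin n)) = y
    rw [hg]; simp only [Submodule.coe_zero, add_zero]
    congr 1
    exact congrArg Subtype.val (e.left_inv hmem.2)
  -- the local inverse ψ
  set ψ := hΦst.localInverse Φ _ _ with hψdef
  have hψd : HasStrictFDerivAt ψ
      (Te.symm : EuclideanSpace ℝ (Fin n) →L[ℝ] (EuclideanSpace ℝ (Fin d) × W))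
      (Φ (e x', (0 : W))) := hΦst.to_localInverse
  have hΦp0 : Φ (e x', (0 : W)) = (x' : EuclideanSpace ℝ (Fin n)) := by
    rw [hΦ]; simp only [Submodule.coe_zero, add_zero]; exact hgp0
  -- ψ ∘ c eventually has vanishing second component
  have hev0 : ∀ᶠ h in nhds (0:ℝ), (ψ (c h)).2 = (0 : W) := by
    have hcc : ContinuousAt c 0 := hcd.continuousAt
    have evM' : ∀ᶠ y in nhds (c 0), y ∈ M →
        ∃ q, (q, (0 : W)) ∈ φ.source ∧ Φ (q, (0 : W)) = y := by
      rw [hc0]; exact evM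
    have hev := hcc.eventually evM'
    filter_upwards [hev, hcM] with h h1 h2
    obtain ⟨q, hq1, hq2⟩ := h1 h2
    have : ψ (c h) = (q, (0 : W)) := by
      have hl : φ.symm (φ (q, (0:W))) = (q, (0:W)) := φ.left_inv hq1
      rw [hφcoe, hq2] at hl
      exact hl
    rw [this]
  -- derivative of second component
  have hψd' : HasStrictFDerivAt ψ
      (Te.symm : EuclideanSpace ℝ (Fin n) →L[ℝ] (EuclideanSpace ℝ (Fin d) × W)) (c 0) := by
    rw [hc0]; rw [hΦp0] at hψd; exact hψd
  have hψc : HasDerivAt (fun h : ℝ => ψ (c h))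
      ((Te.symm : EuclideanSpace ℝ (Fin n) →L[ℝ] (EuclideanSpace ℝ (Fin d) × W)) v) 0 :=
    hψd'.hasFDerivAt.comp_hasDerivAt 0 hcd
  have hsnd : HasDerivAt (fun h : ℝ => (ψ (c h)).2)
      (((Te.symm : EuclideanSpace ℝ (Fin n) →L[ℝ] (EuclideanSpace ℝ (Fin d) × W)) v).2) 0 :=
    (ContinuousLinearMap.snd ℝ (EuclideanSpace ℝ (Fin d)) W).hasFDerivAt.comp_hasDerivAt 0 hψc
  have heq : (fun h : ℝ => (ψ (c h)).2) =ᶠ[nhds (0:ℝ)] fun _ => (0 : W) := hev0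
  have hsnd0 : HasDerivAt (fun _ : ℝ => (0 : W))
      (((Te.symm : EuclideanSpace ℝ (Fin n) →L[ℝ] (EuclideanSpace ℝ (Fin d) × W)) v).2) 0 :=
    (heq.hasDerivAt_iff).mp hsnd
  have hzero2 : ((Te.symm : EuclideanSpace ℝ (Fin n) →L[ℝ] (EuclideanSpace ℝ (Fin d) × W)) v).2
      = (0 : W) := hsnd0.unique (hasDerivAt_const 0 0)
  refine ⟨(Te.symm v).1, ?_⟩
  show Df (Te.symm v).1 = v
  have happ : Te (Te.symm v) = v := Te.apply_symm_apply v
  rw [hTecoe, hTapp] at happ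
  have h2' : ((Te.symm v).2 : EuclideanSpace ℝ (Fin n)) = 0 := by
    have : (Te.symm v).2 = (0 : W) := hzero2
    rw [this]; rfl
  rw [h2'] at happ
  simpa using happ


end Aux

theorem stmt16 {n d : ℕ} (M : Set (EuclideanSpace ℝ (Fin n)))
    (hMne : M.Nonempty) (hMcpt : IsCompact M)
    [ChartedSpace (EuclideanSpace ℝ (Fin d)) M]
    [IsManifold (𝓡 d) (⊤ : ℕ∞) M]
    (hsmooth : ContMDiff (𝓡 d) 𝓘(ℝ, EuclideanSpace ℝ (Fin n)) 2
      ((↑) : M → EuclideanSpace ℝ (Fin n)))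
    (himm : ∀ x : M, Function.Injective
      (mfderiv (𝓡 d) 𝓘(ℝ, EuclideanSpace ℝ (Fin n))
        ((↑) : M → EuclideanSpace ℝ (Fin n)) x))
    (A : Matrix (Fin n) (Fin n) ℝ) :
    (∀ t : ℝ, (⇑(Matrix.toEuclideanLin (NormedSpace.exp (t • A)))) '' M = M) ↔
      ∀ x : M, Matrix.toEuclideanLin A (x : EuclideanSpace ℝ (Fin n)) ∈
        Set.range (mfderiv (𝓡 d) 𝓘(ℝ, EuclideanSpace ℝ (Fin n))
          ((↑) : M → EuclideanSpace ℝ (Fin n)) x) := by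
  set L : EuclideanSpace ℝ (Fin n) →L[ℝ] EuclideanSpace ℝ (Fin n) :=
    Matrix.toEuclideanCLM (𝕜 := ℝ) A with hL
  have hcoe : ∀ t : ℝ, ⇑(Matrix.toEuclideanLin (NormedSpace.exp (t • A)))
      = ⇑(NormedSpace.exp (t • L)) := by
    intro t
    funext y
    have h1 : Matrix.toEuclideanLin (NormedSpace.exp (t • A)) y
        = Matrix.toEuclideanCLM (𝕜 := ℝ) (NormedSpace.exp (t • A)) y := rfl
    have h2 : Matrix.toEuclideanCLM (𝕜 := ℝ) (t • A) = t • L := by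
      rw [hL]; exact map_smul _ t A
    rw [h1, stmt16.expCLM, h2]
  have hLA : ∀ y : EuclideanSpace ℝ (Fin n), Matrix.toEuclideanLin A y = L y := fun _ => rfl
  constructor
  · -- invariance implies tangency
    intro hM x'
    rw [hLA]
    apply tangent_of_curve hsmooth himm x'
      (fun h : ℝ => NormedSpace.exp (h • L) (x' : EuclideanSpace ℝ (Fin n)))
    · exact stmt16.exp_zero_apply L _
    · refine Filter.Eventually.of_forall (fun h => ?_)
      have : NormedSpace.exp (h • L) (x' : EuclideanSpace ℝ (Fin n))
          ∈ (⇑(Matrix.toEuclideanLin (NormedSpace.exp (h • A)))) '' M := by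
        rw [hcoe h]
        exact Set.mem_image_of_mem _ x'.2
      rw [hM h] at this
      exact this
    · have := stmt16.flow_hasDerivAt L (x' : EuclideanSpace ℝ (Fin n)) 0
      rw [stmt16.exp_zero_apply L] at this
      exact this
  · -- tangency implies invariance
    intro hT t
    have hA1 : ∀ x' : M, L (x' : EuclideanSpace ℝ (Fin n)) ∈
        Set.range (mfderiv (𝓡 d) 𝓘(ℝ, EuclideanSpace ℝ (Fin n))
          ((↑) : M → EuclideanSpace ℝ (Fin n)) x') := by
      intro x'
      have := hT x'
      rwa [hLA] at this
    have hA2 : ∀ x' : M, (-L) (x' : EuclideanSpace ℝ (Fin n)) ∈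
        Set.range (mfderiv (𝓡 d) 𝓘(ℝ, EuclideanSpace ℝ (Fin n))
          ((↑) : M → EuclideanSpace ℝ (Fin n)) x') := by
      intro x'
      obtain ⟨u, hu⟩ := hA1 x'
      exact ⟨-u, by rw [map_neg, hu]; rfl⟩
    have hinv : ∀ s : ℝ, ∀ y ∈ M, NormedSpace.exp (s • L) y ∈ M := by
      intro s y hy
      rcases le_or_gt 0 s with hs | hs
      · exact invariance_half hMne hMcpt hsmooth L hA1 hy hs
      · have hrw : s • L = (-s) • (-L) := by rw [smul_neg, neg_smul, neg_neg]
        rw [hrw]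
        exact invariance_half hMne hMcpt hsmooth (-L) hA2 hy (by linarith)
    have hmul : ∀ y : EuclideanSpace ℝ (Fin n),
        NormedSpace.exp (t • L) (NormedSpace.exp ((-t) • L) y) = y := by
      intro y
      have hneg : (-t) • L = -(t • L) := neg_smul t L
      have hcomm : Commute (t • L) ((-t) • L) := by
        rw [hneg]; exact (Commute.refl (t • L)).neg_right
      have hadd := (NormedSpace.exp_add_of_commute_of_mem_ball (𝕂 := ℝ) hcomm
        ((NormedSpace.expSeries_radius_eq_top ℝ (EuclideanSpace ℝ (Fin n) →L[ℝ] EuclideanSpace ℝ (Fin n))).symm ▸ edist_lt_top _ _)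
        ((NormedSpace.expSeries_radius_eq_top ℝ (EuclideanSpace ℝ (Fin n) →L[ℝ] EuclideanSpace ℝ (Fin n))).symm ▸ edist_lt_top _ _)).symm
      have hzero : t • L + (-t) • L = 0 := by
        rw [hneg]; abel
      rw [hzero, NormedSpace.exp_zero] at hadd
      calc NormedSpace.exp (t • L) (NormedSpace.exp ((-t) • L) y)
          = (NormedSpace.exp (t • L) * NormedSpace.exp ((-t) • L)) y := rfl
        _ = (1 : EuclideanSpace ℝ (Fin n) →L[ℝ] EuclideanSpace ℝ (Fin n)) y := by rw [← hadd]
        _ = y := rfl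
    rw [hcoe t]
    apply Set.eq_of_subset_of_subset
    · rintro - ⟨y, hy, rfl⟩
      exact hinv t y hy
    · intro y hy
      exact ⟨NormedSpace.exp ((-t) • L) y, hinv (-t) y hy, hmul y⟩
end
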